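/- arXiv:1003.4715 — 5 statements merged into one kernel-verified Lean document; each statement's English description precedes it below -/
import Mathlib

section
/- The two formulae for the spreading speed agree: sup{a ∈ ℝ : κ*(a) < 0} = inf{κ(θ)/θ : θ > 0} (as elements of the extended reals). -/
open MeasureTheory Filter Topology

/-- The log-Laplace transform of the intensity measure `μ`:
`κ(θ) = log ∫ e^{θ z} μ(dz)` for `θ ≥ 0`, and `κ(θ) = ∞` for `θ < 0`. -/
noncomputable def kappa (μ : Measure ℝ) (θ : ℝ) : EReal :=
  if 0 ≤ θ then (∫⁻ z, ENNReal.ofReal (Real.exp (θ * z)) ∂μ).log else ⊤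

/-- The Fenchel dual `κ*(a) = sup_{θ ∈ ℝ} (θ a − κ(θ))`. -/
noncomputable def kappaStar (μ : Measure ℝ) (a : ℝ) : EReal :=
  ⨆ θ : ℝ, ((θ * a : ℝ) : EReal) - kappa μ θ

/-- Lower bound on `kappa` for nonnegative `θ`, from a set of measure `> 1`. -/
lemma kappa_lower (μ : Measure ℝ) [IsFiniteMeasure μ] (R : ℝ) (θ : ℝ) (hθ : 0 ≤ θ)
    (hm1 : 1 < μ (Set.Ici (-R))) :
    ((-(θ * R) + Real.log (μ (Set.Ici (-R))).toReal : ℝ) : EReal) ≤ kappa μ θ := by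
  set m : ENNReal := μ (Set.Ici (-R)) with hm
  have hmtop : m ≠ ⊤ := measure_ne_top μ _
  have hmr : (1:ℝ) < m.toReal := by
    rw [← ENNReal.toReal_one]
    exact ENNReal.toReal_strict_mono hmtop hm1
  have hmrpos : (0:ℝ) < m.toReal := lt_trans one_pos hmr
  rw [kappa, if_pos hθ]
  have key : ENNReal.ofReal (Real.exp (-(θ * R) + Real.log m.toReal)) ≤
      ∫⁻ z, ENNReal.ofReal (Real.exp (θ * z)) ∂μ := by
    have h1 : ENNReal.ofReal (Real.exp (-(θ * R) + Real.log m.toReal)) =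
        ENNReal.ofReal (Real.exp (θ * (-R))) * m := by
      rw [Real.exp_add, Real.exp_log hmrpos, ENNReal.ofReal_mul (Real.exp_nonneg _),
        ENNReal.ofReal_toReal hmtop]
      ring_nf
    rw [h1]
    calc ENNReal.ofReal (Real.exp (θ * (-R))) * m
        = ∫⁻ z, (Set.Ici (-R)).indicator
            (fun _ => ENNReal.ofReal (Real.exp (θ * (-R)))) z ∂μ := by
          rw [lintegral_indicator measurableSet_Ici, setLIntegral_const]
      _ ≤ ∫⁻ z, ENNReal.ofReal (Real.exp (θ * z)) ∂μ := by
          apply lintegral_mono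
          intro z
          by_cases hz : z ∈ Set.Ici (-R)
          · rw [Set.indicator_of_mem hz]
            exact ENNReal.ofReal_le_ofReal (Real.exp_le_exp.2
              (mul_le_mul_of_nonneg_left hz hθ))
          · rw [Set.indicator_of_notMem hz]; exact zero_le
  calc ((-(θ * R) + Real.log m.toReal : ℝ) : EReal)
      = (ENNReal.ofReal (Real.exp (-(θ * R) + Real.log m.toReal))).log := by
        rw [ENNReal.log_ofReal_of_pos (Real.exp_pos _), Real.log_exp]
    _ ≤ _ := ENNReal.log_monotone key

/-- Key: any real below the inf lies in the set. -/
lemma mem_of_lt_inf (μ : Measure ℝ) [IsFiniteMeasure μ] (hμ : 1 < μ Set.univ) (a : ℝ)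
    (ha : (a : EReal) < ⨅ θ ∈ {θ : ℝ | 0 < θ}, kappa μ θ / (θ : EReal)) :
    kappaStar μ a < 0 := by
  -- find R with μ(Ici (-R)) > 1
  obtain ⟨n, hn⟩ : ∃ n : ℕ, 1 < μ (Set.Ici (-(n:ℝ))) := by
    have huniv : μ Set.univ = ⨆ n : ℕ, μ (Set.Ici (-(n:ℝ))) := by
      rw [← Directed.measure_iUnion]
      · congr 1
        ext z
        simp only [Set.mem_iUnion, Set.mem_Ici, Set.mem_univ, true_iff]
        obtain ⟨n, hn⟩ := exists_nat_ge (-z)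
        exact ⟨n, by linarith⟩
      · exact Monotone.directed_le fun i j hij =>
          Set.Ici_subset_Ici.2 (neg_le_neg (by exact_mod_cast hij))
    rw [huniv] at hμ
    exact lt_iSup_iff.1 hμ
  set R : ℝ := (n : ℝ) with hR
  have hR0 : 0 ≤ R := Nat.cast_nonneg n
  set mr : ℝ := (μ (Set.Ici (-R))).toReal with hmr
  have hmr1 : (1:ℝ) < mr := by
    rw [hmr, ← ENNReal.toReal_one]
    exact ENNReal.toReal_strict_mono (measure_ne_top μ _) hn
  have hlog : 0 < Real.log mr := Real.log_pos hmr1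
  -- get b strictly between a and the inf
  obtain ⟨b, hab, hbM⟩ := EReal.exists_between_coe_real ha
  have hab' : a < b := EReal.coe_lt_coe_iff.1 hab
  -- for θ > 0, θ * b ≤ kappa μ θ
  have key2 : ∀ θ : ℝ, 0 < θ → ((θ * b : ℝ) : EReal) ≤ kappa μ θ := by
    intro θ hθ
    have h1 : (b : EReal) < kappa μ θ / (θ : EReal) :=
      lt_of_lt_of_le hbM (iInf₂_le θ hθ)
    by_contra hcon
    push_neg at hcon
    have : kappa μ θ / (θ : EReal) ≤ (b : EReal) := by
      rw [EReal.div_le_iff_le_mul (by exact_mod_cast hθ) (EReal.coe_ne_top θ)]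
      calc kappa μ θ ≤ ((θ * b : ℝ) : EReal) := hcon.le
        _ = (θ : EReal) * (b : EReal) := EReal.coe_mul θ b
    exact absurd h1 this.not_gt
  -- choose ε and c
  set ε : ℝ := min 1 (Real.log mr / (2 * (|a| + R + 1))) with hε
  have hden : 0 < 2 * (|a| + R + 1) := by positivity
  have hε0 : 0 < ε := lt_min one_pos (div_pos hlog hden)
  set c : ℝ := min (Real.log mr / 2) (ε * (b - a)) with hc
  have hc0 : 0 < c := lt_min (by positivity) (mul_pos hε0 (by linarith))
  have hbound : ∀ θ : ℝ, ((θ * a : ℝ) : EReal) - kappa μ θ ≤ ((-c : ℝ) : EReal) := by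
    intro θ
    rcases lt_or_ge θ 0 with hθ | hθ
    · rw [kappa, if_neg (not_le.2 hθ)]
      simp
    · rcases le_or_gt θ ε with hθε | hθε
      · -- small θ: use the lower bound on kappa
        have h1 := kappa_lower μ R θ hθ hn
        calc ((θ * a : ℝ) : EReal) - kappa μ θ
            ≤ ((θ * a : ℝ) : EReal) - ((-(θ * R) + Real.log mr : ℝ) : EReal) :=
              EReal.sub_le_sub le_rfl h1
          _ = ((θ * a - (-(θ * R) + Real.log mr) : ℝ) : EReal) := (EReal.coe_sub _ _).symm
          _ ≤ ((-c : ℝ) : EReal) := by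
              rw [EReal.coe_le_coe_iff]
              have h2 : θ * a + θ * R ≤ ε * (|a| + R) := by
                have : θ * a ≤ θ * |a| :=
                  mul_le_mul_of_nonneg_left (le_abs_self a) hθ
                have h3 : θ * |a| ≤ ε * |a| :=
                  mul_le_mul_of_nonneg_right hθε (abs_nonneg a)
                have h4 : θ * R ≤ ε * R := mul_le_mul_of_nonneg_right hθε hR0
                nlinarith
              have h6 : ε ≤ Real.log mr / (2 * (|a| + R + 1)) := min_le_right _ _
              have h5 : ε * (|a| + R + 1) ≤ Real.log mr / 2 :=
                calc ε * (|a| + R + 1) ≤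
                    Real.log mr / (2 * (|a| + R + 1)) * (|a| + R + 1) :=
                      mul_le_mul_of_nonneg_right h6 (by positivity)
                  _ = Real.log mr / 2 := by field_simp
              have h7 : c ≤ Real.log mr / 2 := min_le_left _ _
              have h8 : 0 < ε := hε0
              nlinarith
      · -- large θ: use key2
        have h1 := key2 θ (lt_of_lt_of_le hε0 hθε.le)
        calc ((θ * a : ℝ) : EReal) - kappa μ θ
            ≤ ((θ * a : ℝ) : EReal) - ((θ * b : ℝ) : EReal) :=
              EReal.sub_le_sub le_rfl h1
          _ = ((θ * a - θ * b : ℝ) : EReal) := (EReal.coe_sub _ _).symm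
          _ ≤ ((-c : ℝ) : EReal) := by
              rw [EReal.coe_le_coe_iff]
              have h2 : ε * (b - a) ≤ θ * (b - a) :=
                mul_le_mul_of_nonneg_right hθε.le (by linarith)
              have h3 : c ≤ ε * (b - a) := min_le_right _ _
              nlinarith
  calc kappaStar μ a ≤ ((-c : ℝ) : EReal) := iSup_le hbound
    _ < 0 := by exact_mod_cast neg_neg_iff_pos.2 hc0


/-- The two formulae for the spreading speed agree:
`sup {a : κ*(a) < 0} = inf {κ(θ)/θ : θ > 0}` in the extended reals. -/
theorem speed_formulae_agree (μ : Measure ℝ) [IsFiniteMeasure μ]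
    (hμ : 1 < μ Set.univ)
    (hφ : ∃ φ : ℝ, 0 < φ ∧ kappa μ φ < ⊤) :
    (⨆ a ∈ {a : ℝ | kappaStar μ a < 0}, (a : EReal)) =
      ⨅ θ ∈ {θ : ℝ | 0 < θ}, kappa μ θ / (θ : EReal) := by
  apply le_antisymm
  · -- sup ≤ inf
    apply iSup₂_le
    intro a ha
    apply le_iInf₂
    intro θ hθ
    -- θ * a - kappa μ θ < 0, hence a < kappa μ θ / θ
    have h1 : ((θ * a : ℝ) : EReal) - kappa μ θ < 0 :=
      lt_of_le_of_lt (le_iSup (fun θ => ((θ * a : ℝ) : EReal) - kappa μ θ) θ) ha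
    have h2 : ((θ * a : ℝ) : EReal) < kappa μ θ := by
      rw [EReal.sub_lt_iff (Or.inr (EReal.coe_ne_bot _)) (Or.inr (EReal.coe_ne_top _))] at h1
      rwa [zero_add] at h1
    by_contra hcon
    push_neg at hcon
    have h3 : kappa μ θ / (θ : EReal) ≤ (a : EReal) := hcon.le
    rw [EReal.div_le_iff_le_mul (by exact_mod_cast hθ) (EReal.coe_ne_top θ)] at h3
    rw [← EReal.coe_mul] at h3
    exact absurd h2 h3.not_gt
  · -- inf ≤ sup
    by_contra hcon
    push_neg at hcon
    obtain ⟨b, hb1, hb2⟩ := EReal.exists_between_coe_real hcon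
    have hb3 : kappaStar μ b < 0 := mem_of_lt_inf μ hμ b hb2
    have : (b : EReal) ≤ ⨆ a ∈ {a : ℝ | kappaStar μ a < 0}, (a : EReal) :=
      le_iSup₂ (f := fun (a : ℝ) (_ : a ∈ {a : ℝ | kappaStar μ a < 0}) => (a : EReal)) b hb3
    exact absurd hb1 this.not_gt
end

section
/- If μ((Γ,∞)) > 0 (displacements greater than Γ are possible in expectation), then Γ is a real number and there exists a finite ϑ > 0 with ϑ·Γ − κ(ϑ) = 0. -/
open MeasureTheory Filter Topology

lemma exp_mul_measurable (θ : ℝ) :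
    Measurable fun z : ℝ => ENNReal.ofReal (Real.exp (θ * z)) :=
  ENNReal.measurable_ofReal.comp (Real.measurable_exp.comp (measurable_id.const_mul θ))

/-- Chernoff-type lower bound for `κ`. -/
lemma kappa_lower_s5 (μ : Measure ℝ) (θ a : ℝ) (hθ : 0 ≤ θ) :
    ((θ * a : ℝ) : EReal) + (μ (Set.Ioi a)).log ≤ kappa μ θ := by
  rw [kappa, if_pos hθ]
  have h1 : ENNReal.ofReal (Real.exp (θ * a)) * μ (Set.Ioi a)
      ≤ ∫⁻ z, ENNReal.ofReal (Real.exp (θ * z)) ∂μ := by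
    calc ENNReal.ofReal (Real.exp (θ * a)) * μ (Set.Ioi a)
        = ∫⁻ _ in Set.Ioi a, ENNReal.ofReal (Real.exp (θ * a)) ∂μ :=
          (setLIntegral_const _ _).symm
      _ ≤ ∫⁻ z in Set.Ioi a, ENNReal.ofReal (Real.exp (θ * z)) ∂μ := by
          refine setLIntegral_mono (exp_mul_measurable θ) fun z hz => ?_
          exact ENNReal.ofReal_le_ofReal
            (Real.exp_le_exp.2 (mul_le_mul_of_nonneg_left (le_of_lt hz) hθ))
      _ ≤ _ := setLIntegral_le_lintegral _ _
  have h2 := ENNReal.log_monotone h1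
  rwa [ENNReal.log_mul_add, ← EReal.exp_coe, EReal.log_exp] at h2

/-- If `μ((Γ,∞)) > 0`, where `Γ = inf {κ(θ)/θ : θ > 0}`, then `Γ` is a real
number and there is a finite `ϑ > 0` with `ϑ Γ − κ(ϑ) = 0`. -/
theorem exists_root_of_mass_beyond_speed (μ : Measure ℝ) [IsFiniteMeasure μ]
    (hμ : 1 < μ Set.univ)
    (hφ : ∃ φ : ℝ, 0 < φ ∧ kappa μ φ < ⊤)
    (Γ : EReal) (hΓ : Γ = ⨅ θ ∈ {θ : ℝ | 0 < θ}, kappa μ θ / (θ : EReal))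
    (hmass : 0 < μ {z : ℝ | Γ < (z : EReal)}) :
    (∃ G : ℝ, Γ = (G : EReal)) ∧
    ∃ ϑ : ℝ, 0 < ϑ ∧ (ϑ : EReal) * Γ - kappa μ ϑ = 0 := by
  classical
  obtain ⟨φ, hφpos, hφfin⟩ := hφ
  -- choose `a` with `1 < μ (Ioi a)`
  obtain ⟨a, ha⟩ : ∃ a : ℝ, 1 < μ (Set.Ioi a) := by
    have h := tendsto_measure_Ici_atBot μ
    have h2 : ∀ᶠ x : ℝ in atBot, 1 < μ (Set.Ici x) :=
      h.eventually (eventually_gt_nhds hμ)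
    obtain ⟨x, hx⟩ := h2.exists
    exact ⟨x - 1, lt_of_lt_of_le hx (measure_mono fun z hz => lt_of_lt_of_le (by linarith : x - 1 < x) hz)⟩
  -- `log (μ (Ioi a))` is a positive real `la`
  have hane : (μ (Set.Ioi a)).log ≠ ⊤ := by
    simp [ENNReal.log_eq_top_iff, (measure_lt_top μ _).ne]
  have hanb : (0 : EReal) < (μ (Set.Ioi a)).log := by
    simp [ENNReal.zero_lt_log_iff, ha]
  obtain ⟨la, hla⟩ : ∃ la : ℝ, (μ (Set.Ioi a)).log = (la : EReal) := by
    lift (μ (Set.Ioi a)).log to ℝ using ⟨hane, (lt_of_lt_of_le (by simp) hanb.le).ne'⟩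
      with l hl
    exact ⟨l, rfl⟩
  have hla0 : 0 < la := by rw [hla] at hanb; exact_mod_cast hanb
  -- lower bound for Γ
  have hlow : ∀ θ : ℝ, 0 < θ → (a : EReal) ≤ kappa μ θ / (θ : EReal) := by
    intro θ hθ
    rw [EReal.le_div_iff_mul_le (by exact_mod_cast hθ) (EReal.coe_ne_top θ)]
    have h1 := kappa_lower_s5 μ θ a hθ.le
    calc (a : EReal) * (θ : EReal) = ((θ * a : ℝ) : EReal) := by
          rw [← EReal.coe_mul, mul_comm]
      _ ≤ ((θ * a : ℝ) : EReal) + (μ (Set.Ioi a)).log := le_add_of_nonneg_right hanb.le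
      _ ≤ kappa μ θ := h1
  have hΓlow : (a : EReal) ≤ Γ := by
    rw [hΓ]; exact le_iInf₂ fun θ hθ => hlow θ hθ
  -- upper bound for Γ
  have hφnb : kappa μ φ ≠ ⊥ := by
    intro hbot
    have := kappa_lower_s5 μ φ a hφpos.le
    rw [hbot, le_bot_iff, EReal.add_eq_bot_iff, hla] at this
    rcases this with h | h
    · exact EReal.coe_ne_bot _ h
    · exact EReal.coe_ne_bot _ h
  obtain ⟨r, hr⟩ : ∃ r : ℝ, kappa μ φ = (r : EReal) := by
    lift kappa μ φ to ℝ using ⟨hφfin.ne, hφnb⟩ with k hk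
    exact ⟨k, rfl⟩
  have hΓhigh : Γ ≤ ((r / φ : ℝ) : EReal) := by
    rw [hΓ, EReal.coe_div, ← hr]
    exact iInf₂_le φ hφpos
  -- Γ is a real number G
  obtain ⟨G, hG⟩ : ∃ G : ℝ, Γ = (G : EReal) := by
    lift Γ to ℝ using ⟨(lt_of_le_of_lt hΓhigh (EReal.coe_lt_top _)).ne,
      (lt_of_lt_of_le (EReal.bot_lt_coe a) hΓlow).ne'⟩ with g hg
    exact ⟨g, rfl⟩
  refine ⟨⟨G, hG⟩, ?_⟩
  have haG : a ≤ G := by rw [hG] at hΓlow; exact_mod_cast hΓlow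
  -- choose `b > G` with `μ (Ioi b) > 0`
  obtain ⟨b, hbG, hb⟩ : ∃ b : ℝ, G < b ∧ 0 < μ (Set.Ioi b) := by
    by_contra hcon
    push_neg at hcon
    have hunion : {z : ℝ | Γ < (z : EReal)} ⊆ ⋃ n : ℕ, Set.Ioi (G + 1 / (n + 1)) := by
      intro z hz
      rw [Set.mem_setOf_eq, hG, EReal.coe_lt_coe_iff] at hz
      obtain ⟨n, hn⟩ := exists_nat_one_div_lt (sub_pos.2 hz)
      exact Set.mem_iUnion.2 ⟨n, by simp only [Set.mem_Ioi]; linarith⟩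
    have hnull : μ (⋃ n : ℕ, Set.Ioi (G + 1 / (n + 1))) = 0 := by
      refine measure_iUnion_null fun n => ?_
      have h1 : G < G + 1 / ((n : ℝ) + 1) := by
        have : (0:ℝ) < 1 / ((n : ℝ) + 1) := by positivity
        linarith
      have := hcon _ h1
      exact le_antisymm this (by simp)
    have := measure_mono_null hunion hnull
    rw [this] at hmass
    exact lt_irrefl _ hmass
  -- `log (μ (Ioi b))` is a real `lb`
  have hbne : (μ (Set.Ioi b)).log ≠ ⊤ := by
    simp [ENNReal.log_eq_top_iff, (measure_lt_top μ _).ne]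
  have hbnb : (μ (Set.Ioi b)).log ≠ ⊥ := by
    simp [ENNReal.log_eq_bot_iff, hb.ne']
  obtain ⟨lb, hlb⟩ : ∃ lb : ℝ, (μ (Set.Ioi b)).log = (lb : EReal) := by
    lift (μ (Set.Ioi b)).log to ℝ using ⟨hbne, hbnb⟩ with l hl
    exact ⟨l, rfl⟩
  set c : ℝ := (G + b) / 2 with hc
  have hGc : G < c := by rw [hc]; linarith
  have hcb : c < b := by rw [hc]; linarith
  set d : ℝ := c - G with hd
  have hd0 : 0 < d := by rw [hd]; linarith
  -- minimizing sequence
  have hex : ∀ n : ℕ, ∃ θ : ℝ, 0 < θ ∧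
      kappa μ θ / (θ : EReal) < ((G + d / (n + 1) : ℝ) : EReal) := by
    intro n
    have hlt : Γ < ((G + d / (n + 1) : ℝ) : EReal) := by
      rw [hG, EReal.coe_lt_coe_iff]
      have : 0 < d / ((n : ℝ) + 1) := by positivity
      linarith
    rw [hΓ] at hlt
    obtain ⟨θ, hθ⟩ := iInf_lt_iff.1 hlt
    obtain ⟨hθS, hθlt⟩ := iInf_lt_iff.1 hθ
    exact ⟨θ, hθS, hθlt⟩
  choose θs hθpos hθlt using hex
  -- each `kappa μ (θs n)` is a real `rs n`
  have hge : ∀ n, (G : EReal) ≤ kappa μ (θs n) / ((θs n : ℝ) : EReal) := by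
    intro n
    rw [← hG, hΓ]
    exact iInf₂_le (θs n) (hθpos n)
  have hknt : ∀ n, kappa μ (θs n) ≠ ⊤ := by
    intro n hcon
    have := hθlt n
    rw [hcon, EReal.top_div_of_pos_ne_top (by exact_mod_cast hθpos n) (EReal.coe_ne_top _)] at this
    exact (not_top_lt this)
  have hknb : ∀ n, kappa μ (θs n) ≠ ⊥ := by
    intro n hcon
    have := hge n
    rw [hcon, EReal.bot_div_of_pos_ne_top (by exact_mod_cast hθpos n) (EReal.coe_ne_top _)] at this
    exact (EReal.bot_lt_coe G).not_ge this
  have hrex : ∀ n : ℕ, ∃ r : ℝ, kappa μ (θs n) = (r : EReal) := by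
    intro n
    lift kappa μ (θs n) to ℝ using ⟨hknt n, hknb n⟩ with k hk
    exact ⟨k, rfl⟩
  choose rs hrs using hrex
  -- real inequalities
  have hub : ∀ n, rs n / θs n < G + d / (n + 1) := by
    intro n
    have := hθlt n
    rw [hrs n, ← EReal.coe_div, EReal.coe_lt_coe_iff] at this
    exact this
  have hlb2 : ∀ n, G ≤ rs n / θs n := by
    intro n
    have := hge n
    rw [hrs n, ← EReal.coe_div, EReal.coe_le_coe_iff] at this
    exact this
  have hdc : ∀ n : ℕ, G + d / ((n : ℝ) + 1) ≤ c := by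
    intro n
    have h1 : d / ((n : ℝ) + 1) ≤ d := by
      apply div_le_self hd0.le
      have : (0 : ℝ) ≤ (n : ℝ) := Nat.cast_nonneg n
      linarith
    rw [hd] at h1 ⊢; linarith
  have hrc : ∀ n, rs n ≤ c * θs n := by
    intro n
    have h1 : rs n / θs n ≤ c := le_trans (hub n).le (hdc n)
    calc rs n = rs n / θs n * θs n := (div_mul_cancel₀ (rs n) (hθpos n).ne').symm
      _ ≤ c * θs n := mul_le_mul_of_nonneg_right h1 (hθpos n).le
  -- lower/upper bounds on θs n
  have hlowa : ∀ n, θs n * a + la ≤ rs n := by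
    intro n
    have := kappa_lower_s5 μ (θs n) a (hθpos n).le
    rw [hla, hrs n, ← EReal.coe_add, EReal.coe_le_coe_iff] at this
    exact this
  have hlowb : ∀ n, θs n * b + lb ≤ rs n := by
    intro n
    have := kappa_lower_s5 μ (θs n) b (hθpos n).le
    rw [hlb, hrs n, ← EReal.coe_add, EReal.coe_le_coe_iff] at this
    exact this
  set ε : ℝ := la / (c - a) with hεdef
  have hca : 0 < c - a := by linarith
  have hε0 : 0 < ε := div_pos hla0 hca
  have hεbound : ∀ n, ε ≤ θs n := by
    intro n
    have h1 : θs n * a + la ≤ c * θs n := le_trans (hlowa n) (hrc n)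
    rw [hεdef, div_le_iff₀ hca]
    nlinarith [hθpos n]
  set T : ℝ := -lb / (b - c) with hTdef
  have hbc : 0 < b - c := by linarith
  have hTbound : ∀ n, θs n ≤ T := by
    intro n
    have h1 : θs n * b + lb ≤ c * θs n := le_trans (hlowb n) (hrc n)
    rw [hTdef, le_div_iff₀ hbc]
    nlinarith
  -- compactness: extract convergent subsequence
  obtain ⟨ϑ, hϑmem, ψ, hψmono, hψtendsto⟩ :=
    (isCompact_Icc (a := ε) (b := T)).tendsto_subseq
      (x := θs) (fun n => ⟨hεbound n, hTbound n⟩)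
  have hϑpos : 0 < ϑ := lt_of_lt_of_le hε0 hϑmem.1
  refine ⟨ϑ, hϑpos, ?_⟩
  -- lower bound: ϑ * G ≤ kappa μ ϑ
  have hgeϑ : ((ϑ * G : ℝ) : EReal) ≤ kappa μ ϑ := by
    have h1 : (G : EReal) ≤ kappa μ ϑ / ((ϑ : ℝ) : EReal) := by
      rw [← hG, hΓ]; exact iInf₂_le ϑ hϑpos
    rw [EReal.le_div_iff_mul_le (by exact_mod_cast hϑpos) (EReal.coe_ne_top ϑ)] at h1
    calc ((ϑ * G : ℝ) : EReal) = (G : EReal) * (ϑ : EReal) := by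
          rw [← EReal.coe_mul, mul_comm]
      _ ≤ kappa μ ϑ := h1
  -- upper bound: kappa μ ϑ ≤ ϑ * G, via Fatou
  have hIb : ∀ n, (∫⁻ z, ENNReal.ofReal (Real.exp (θs n * z)) ∂μ)
      ≤ ENNReal.ofReal (Real.exp (θs n * (G + d / (n + 1)))) := by
    intro n
    have h1 : rs n ≤ θs n * (G + d / (n + 1)) := by
      have := (hub n).le
      calc rs n = rs n / θs n * θs n := (div_mul_cancel₀ (rs n) (hθpos n).ne').symm
        _ ≤ (G + d / (n + 1)) * θs n := mul_le_mul_of_nonneg_right this (hθpos n).le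
        _ = θs n * (G + d / (n + 1)) := mul_comm _ _
    have h2 : (∫⁻ z, ENNReal.ofReal (Real.exp (θs n * z)) ∂μ).log
        ≤ ((θs n * (G + d / (n + 1)) : ℝ) : EReal) := by
      have hk : kappa μ (θs n) = (∫⁻ z, ENNReal.ofReal (Real.exp (θs n * z)) ∂μ).log := by
        rw [kappa, if_pos (hθpos n).le]
      rw [← hk, hrs n]
      exact_mod_cast h1
    have h3 := EReal.exp_monotone h2
    rwa [ENNReal.exp_log, EReal.exp_coe] at h3
  have hfatou : (∫⁻ z, ENNReal.ofReal (Real.exp (ϑ * z)) ∂μ)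
      ≤ liminf (fun n => ∫⁻ z, ENNReal.ofReal (Real.exp (θs (ψ n) * z)) ∂μ) atTop := by
    have hmeas : ∀ n : ℕ, Measurable fun z : ℝ => ENNReal.ofReal (Real.exp (θs (ψ n) * z)) :=
      fun n => exp_mul_measurable _
    have key := lintegral_liminf_le (μ := μ) (u := atTop) hmeas
    refine le_trans (le_of_eq (lintegral_congr fun z => ?_)) key
    have hz : Tendsto (fun n => ENNReal.ofReal (Real.exp (θs (ψ n) * z))) atTop
        (𝓝 (ENNReal.ofReal (Real.exp (ϑ * z)))) := by
      apply (ENNReal.continuous_ofReal.tendsto _).comp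
      apply (Real.continuous_exp.tendsto _).comp
      exact hψtendsto.mul_const z
    exact hz.liminf_eq.symm
  have hseq : Tendsto (fun n => θs (ψ n) * (G + d / (ψ n + 1))) atTop (𝓝 (ϑ * G)) := by
    have hzero : Tendsto (fun n : ℕ => d / ((ψ n : ℝ) + 1)) atTop (𝓝 0) := by
      have hbase : Tendsto (fun n : ℕ => d * (1 / ((n : ℝ) + 1))) atTop (𝓝 0) := by
        simpa using tendsto_one_div_add_atTop_nhds_zero_nat.const_mul d
      refine squeeze_zero (fun n => by positivity) (fun n => ?_) (by simpa using hbase)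
      have hψn : (n : ℝ) + 1 ≤ (ψ n : ℝ) + 1 := by
        have hnn : n ≤ ψ n := hψmono.le_apply
        have := (Nat.cast_le (α := ℝ)).2 hnn; linarith
      exact div_le_div_of_nonneg_left hd0.le (by positivity) hψn
    have : Tendsto (fun n : ℕ => G + d / ((ψ n : ℝ) + 1)) atTop (𝓝 (G + 0)) :=
      tendsto_const_nhds.add hzero
    rw [add_zero] at this
    exact hψtendsto.mul this
  have hlim : liminf (fun n => ENNReal.ofReal (Real.exp (θs (ψ n) * (G + d / (ψ n + 1))))) atTop
      = ENNReal.ofReal (Real.exp (ϑ * G)) := by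
    have : Tendsto (fun n => ENNReal.ofReal (Real.exp (θs (ψ n) * (G + d / (ψ n + 1))))) atTop
        (𝓝 (ENNReal.ofReal (Real.exp (ϑ * G)))) := by
      apply (ENNReal.continuous_ofReal.tendsto _).comp
      exact (Real.continuous_exp.tendsto _).comp hseq
    exact this.liminf_eq
  have hfinal : (∫⁻ z, ENNReal.ofReal (Real.exp (ϑ * z)) ∂μ)
      ≤ ENNReal.ofReal (Real.exp (ϑ * G)) := by
    refine le_trans hfatou ?_
    rw [← hlim]
    exact liminf_le_liminf (Eventually.of_forall fun n => hIb (ψ n))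
  have hleϑ : kappa μ ϑ ≤ ((ϑ * G : ℝ) : EReal) := by
    rw [kappa, if_pos hϑpos.le]
    have := ENNReal.log_monotone hfinal
    rwa [← EReal.exp_coe, EReal.log_exp] at this
  have hkeq : kappa μ ϑ = ((ϑ * G : ℝ) : EReal) := le_antisymm hleϑ hgeϑ
  rw [hG, hkeq, ← EReal.coe_mul, ← EReal.coe_sub, sub_self, EReal.coe_zero]
end

section
/- Anomalous spreading speed in the two-type branching Brownian motion example: for every real λ > 1, inf{ max{ (φ²/(2λ) + λ)/φ , (θ²/2 + 1)/θ } : 0 < φ ≤ θ } = (1+λ)/√(2λ). Moreover (1+λ)/√(2λ) > √2, where √2 is the common value of inf_{θ>0}(θ²/(2λ) + λ)/θ and inf_{θ>0}(θ²/2 + 1)/θ, and (1+λ)/√(2λ) → ∞ as λ → ∞. -/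
open Filter Topology

/-- Anomalous spreading speed in the two-type branching Brownian motion
example: for `λ > 1`,
`inf {max ((φ²/(2λ)+λ)/φ) ((θ²/2+1)/θ) : 0 < φ ≤ θ} = (1+λ)/√(2λ)`, which
exceeds `√2`, the common value of the one-type speeds, and tends to `∞` as
`λ → ∞`. -/
theorem anomalous_speed_example (lam : ℝ) (hlam : 1 < lam) :
    sInf {x : ℝ | ∃ φ θ : ℝ, 0 < φ ∧ φ ≤ θ ∧
        x = max ((φ ^ 2 / (2 * lam) + lam) / φ) ((θ ^ 2 / 2 + 1) / θ)} =
      (1 + lam) / Real.sqrt (2 * lam) ∧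
    Real.sqrt 2 < (1 + lam) / Real.sqrt (2 * lam) ∧
    sInf {x : ℝ | ∃ θ : ℝ, 0 < θ ∧ x = (θ ^ 2 / (2 * lam) + lam) / θ} = Real.sqrt 2 ∧
    sInf {x : ℝ | ∃ θ : ℝ, 0 < θ ∧ x = (θ ^ 2 / 2 + 1) / θ} = Real.sqrt 2 ∧
    Tendsto (fun l : ℝ => (1 + l) / Real.sqrt (2 * l)) atTop atTop := by
  have hlam0 : (0:ℝ) < lam := by linarith
  set s := Real.sqrt (2 * lam) with hs_def
  have hs0 : 0 < s := Real.sqrt_pos.2 (by linarith)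
  have hs2 : s ^ 2 = 2 * lam := Real.sq_sqrt (by linarith)
  have hr2 : Real.sqrt 2 ^ 2 = 2 := Real.sq_sqrt (by norm_num)
  have hr2pos : (0:ℝ) < Real.sqrt 2 := Real.sqrt_pos.2 (by norm_num)
  refine ⟨?_, ?_, ?_, ?_, ?_⟩
  · -- main infimum
    apply IsLeast.csInf_eq
    constructor
    · refine ⟨s, s, hs0, le_refl s, ?_⟩
      have h1 : (s ^ 2 / (2 * lam) + lam) / s = (1 + lam) / s := by
        rw [hs2]; field_simp
      have h2 : (s ^ 2 / 2 + 1) / s = (1 + lam) / s := by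
        rw [hs2]; ring_nf
      rw [h1, h2, max_self]
    · rintro x ⟨φ, θ, hφ, hφθ, rfl⟩
      have hθ : 0 < θ := lt_of_lt_of_le hφ hφθ
      rcases le_total s θ with h | h
      · refine le_max_of_le_right ?_
        rw [div_le_div_iff₀ hs0 hθ]
        have h1 : 0 ≤ θ - s := by linarith
        have h2 : 0 ≤ s * θ - 2 := by nlinarith
        nlinarith [mul_nonneg h1 h2]
      · refine le_max_of_le_left ?_
        have hφs : φ ≤ s := le_trans hφθ h
        have hrw : φ ^ 2 / (2 * lam) + lam = (φ ^ 2 + 2 * lam ^ 2) / (2 * lam) := by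
          field_simp
        rw [hrw, div_div, div_le_div_iff₀ hs0 (by positivity)]
        have h1 : 0 ≤ s - φ := by linarith
        have h2 : 0 ≤ lam * s - φ := by nlinarith
        have hcube : s ^ 3 = 2 * lam * s := by
          rw [pow_succ, hs2]
        nlinarith [mul_nonneg (mul_nonneg h1 h2) hs0.le, hs2, hcube]
  · -- √2 < (1+λ)/√(2λ)
    rw [lt_div_iff₀ hs0]
    have hsl : Real.sqrt lam ^ 2 = lam := Real.sq_sqrt hlam0.le
    have hsl1 : 1 < Real.sqrt lam := by
      nlinarith [Real.sqrt_nonneg lam]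
    have hmul : Real.sqrt 2 * s = 2 * Real.sqrt lam := by
      rw [hs_def, ← Real.sqrt_mul (by norm_num : (0:ℝ) ≤ 2)]
      rw [show (2 : ℝ) * (2 * lam) = 4 * lam by ring,
        show (4:ℝ) * lam = 2 ^ 2 * lam by ring,
        Real.sqrt_mul (by positivity), Real.sqrt_sq (by norm_num)]
    rw [hmul]
    nlinarith
  · -- first one-type speed
    apply IsLeast.csInf_eq
    constructor
    · refine ⟨Real.sqrt 2 * lam, by positivity, ?_⟩
      have hne : Real.sqrt 2 ≠ 0 := ne_of_gt hr2pos
      field_simp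
      nlinarith
    · rintro x ⟨θ, hθ, rfl⟩
      have hrw : θ ^ 2 / (2 * lam) + lam = (θ ^ 2 + 2 * lam ^ 2) / (2 * lam) := by
        field_simp
      rw [hrw, div_div, le_div_iff₀ (by positivity)]
      nlinarith [sq_nonneg (θ - Real.sqrt 2 * lam), hr2]
  · -- second one-type speed
    apply IsLeast.csInf_eq
    constructor
    · refine ⟨Real.sqrt 2, hr2pos, ?_⟩
      have hne : Real.sqrt 2 ≠ 0 := ne_of_gt hr2pos
      field_simp
      nlinarith
    · rintro x ⟨θ, hθ, rfl⟩
      rw [le_div_iff₀ hθ]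
      nlinarith [sq_nonneg (θ - Real.sqrt 2)]
  · -- tendsto atTop
    rw [tendsto_atTop]
    intro b
    filter_upwards [eventually_ge_atTop (max 1 (2 * b ^ 2))] with l hl
    have hl1 : (1:ℝ) ≤ l := le_trans (le_max_left _ _) hl
    have hlb : 2 * b ^ 2 ≤ l := le_trans (le_max_right _ _) hl
    have h0 : 0 < Real.sqrt (2 * l) := Real.sqrt_pos.2 (by linarith)
    have hself : Real.sqrt (2 * l) * Real.sqrt (2 * l) = 2 * l :=
      Real.mul_self_sqrt (by linarith)
    have h1 : Real.sqrt (2 * l) / 2 ≤ (1 + l) / Real.sqrt (2 * l) := by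
      rw [div_le_div_iff₀ two_pos h0]
      nlinarith
    have h2 : b ≤ Real.sqrt (2 * l) / 2 := by
      rcases le_or_gt b 0 with hb | hb
      · exact le_trans hb (by positivity)
      · have h4 : (2 * b) ^ 2 ≤ 2 * l := by nlinarith
        have := Real.sqrt_le_sqrt h4
        rw [Real.sqrt_sq (by positivity)] at this
        linarith
    linarith
end

section
/- The two formulae for the anomalous spreading speed agree: with c = cv(κ*_ν°, κ*_η) the greatest closed convex minorant of the swept dual κ*_ν° and κ*_η, and r = c° its swept version, one has sup{a ∈ ℝ : r(a) < 0} = inf{ max{ κ_ν(φ)/φ , κ_η(θ)/θ } : 0 < φ ≤ θ } (as elements of the extended reals). -/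
open MeasureTheory Filter Topology

/-- The swept version `f°` of a function: positive values are swept to `∞`. -/
noncomputable def sweep (f : ℝ → EReal) (a : ℝ) : EReal :=
  if f a ≤ 0 then f a else ⊤

/-- `cv(f,g)`: the greatest closed convex function below both `f` and `g`,
given pointwise as the supremum of the affine minorants of `min f g`. -/
noncomputable def cvMinorant (f g : ℝ → EReal) (a : ℝ) : EReal :=
  ⨆ (p : ℝ) (q : ℝ) (_ : ∀ x : ℝ, ((p * x + q : ℝ) : EReal) ≤ min (f x) (g x)),
    ((p * a + q : ℝ) : EReal)

open scoped ENNReal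

namespace AnomalousAux

lemma measurable_ofReal_exp (t : ℝ) : Measurable fun z : ℝ => ENNReal.ofReal (Real.exp (t * z)) :=
  ENNReal.measurable_ofReal.comp (Real.measurable_exp.comp (measurable_const_mul t))

lemma lintegral_exp_pos (μ : Measure ℝ) (hμ : 0 < μ Set.univ) (t : ℝ) :
    0 < ∫⁻ z, ENNReal.ofReal (Real.exp (t * z)) ∂μ := by
  rw [lintegral_pos_iff_support (measurable_ofReal_exp t)]
  have : Function.support (fun z : ℝ => ENNReal.ofReal (Real.exp (t * z))) = Set.univ :=
    Set.eq_univ_of_forall fun z => ne_of_gt (ENNReal.ofReal_pos.2 (Real.exp_pos _))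
  rw [this]; exact hμ

lemma kappa_ne_bot (μ : Measure ℝ) (hμ : 0 < μ Set.univ) (t : ℝ) : kappa μ t ≠ ⊥ := by
  unfold kappa
  split
  · simp only [ne_eq, ENNReal.log_eq_bot_iff]
    exact ne_of_gt (lintegral_exp_pos μ hμ t)
  · simp

lemma kappa_nonneg_of_ne_top (μ : Measure ℝ) (t : ℝ) (h : kappa μ t ≠ ⊤) : 0 ≤ t := by
  by_contra hlt
  exact h (by simp [kappa, hlt])

lemma kappa_zero (μ : Measure ℝ) : kappa μ 0 = (μ Set.univ).log := by
  simp [kappa]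

/-- linear lower bound from a right tail. -/
lemma kappa_tail_lb (μ : Measure ℝ) (c t : ℝ) (ht : 0 ≤ t) :
    ((t * c : ℝ) : EReal) + (μ {z : ℝ | c ≤ z}).log ≤ kappa μ t := by
  have hle : ENNReal.ofReal (Real.exp (t * c)) * μ {z : ℝ | c ≤ z}
      ≤ ∫⁻ z, ENNReal.ofReal (Real.exp (t * z)) ∂μ := by
    calc ENNReal.ofReal (Real.exp (t * c)) * μ {z : ℝ | c ≤ z}
        = ∫⁻ _ in {z : ℝ | c ≤ z}, ENNReal.ofReal (Real.exp (t * c)) ∂μ := by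
          rw [setLIntegral_const]
      _ ≤ ∫⁻ z in {z : ℝ | c ≤ z}, ENNReal.ofReal (Real.exp (t * z)) ∂μ :=
          setLIntegral_mono (measurable_ofReal_exp t) (fun x hx =>
            ENNReal.ofReal_le_ofReal (Real.exp_le_exp.2 (mul_le_mul_of_nonneg_left hx ht)))
      _ ≤ ∫⁻ z, ENNReal.ofReal (Real.exp (t * z)) ∂μ :=
          setLIntegral_le_lintegral _ _
  have hlog := ENNReal.log_monotone hle
  rw [ENNReal.log_mul_add, ENNReal.log_ofReal_of_pos (Real.exp_pos _), Real.log_exp] at hlog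
  unfold kappa
  rw [if_pos ht]
  exact hlog

/-- convexity (chord) inequality for `kappa`, real form. -/
lemma kappa_chord (μ : Measure ℝ) (s u t ks kt : ℝ) (hs : 0 ≤ s) (hsu : s < u) (hut : u < t)
    (hks : kappa μ s = (ks : ℝ)) (hkt : kappa μ t = (kt : ℝ)) :
    kappa μ u ≤ ((((t - u) * ks + (u - s) * kt) / (t - s) : ℝ) : EReal) := by
  set l : ℝ := (t - u) / (t - s) with hl
  have hts : 0 < t - s := by linarith
  have hl0 : 0 < l := div_pos (by linarith) hts
  have hl1 : l < 1 := by rw [hl, div_lt_one hts]; linarith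
  have h1l : 1 - l = (u - s)/(t - s) := by rw [hl]; field_simp; ring
  have hu : l * s + (1 - l) * t = u := by rw [hl, h1l]; field_simp; ring
  have hconj : (1/l).HolderConjugate (1/(1-l)) := by
    constructor
    · rw [one_div, one_div, inv_inv, inv_inv, inv_one]; ring
    · exact one_div_pos.2 hl0
    · exact one_div_pos.2 (by linarith)
  set f : ℝ → ℝ≥0∞ := fun z => (ENNReal.ofReal (Real.exp (s * z))) ^ l with hf
  set g : ℝ → ℝ≥0∞ := fun z => (ENNReal.ofReal (Real.exp (t * z))) ^ (1 - l) with hg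
  have hfg : ∀ z : ℝ, (f * g) z = ENNReal.ofReal (Real.exp (u * z)) := by
    intro z
    show (ENNReal.ofReal (Real.exp (s * z))) ^ l * (ENNReal.ofReal (Real.exp (t * z))) ^ (1 - l)
      = _
    rw [ENNReal.ofReal_rpow_of_pos (Real.exp_pos _), ENNReal.ofReal_rpow_of_pos (Real.exp_pos _),
      ← Real.exp_mul, ← Real.exp_mul,
      ← ENNReal.ofReal_mul (le_of_lt (Real.exp_pos _)), ← Real.exp_add]
    congr 1
    rw [← hu]; ring
  have hHolder := ENNReal.lintegral_mul_le_Lp_mul_Lq μ hconj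
    (((measurable_ofReal_exp s).pow_const l).aemeasurable)
    (((measurable_ofReal_exp t).pow_const (1 - l)).aemeasurable)
  -- simplify both sides
  have hfp : ∀ z : ℝ, f z ^ (1/l) = ENNReal.ofReal (Real.exp (s * z)) := by
    intro z
    rw [hf, ← ENNReal.rpow_mul]
    rw [mul_one_div, div_self (ne_of_gt hl0), ENNReal.rpow_one]
  have hgq : ∀ z : ℝ, g z ^ (1/(1-l)) = ENNReal.ofReal (Real.exp (t * z)) := by
    intro z
    rw [hg, ← ENNReal.rpow_mul]
    rw [mul_one_div, div_self (by linarith : (1:ℝ) - l ≠ 0), ENNReal.rpow_one]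
  rw [lintegral_congr hfg, lintegral_congr hfp, lintegral_congr hgq] at hHolder
  have h1l' : 1/(1/l) = l := by field_simp
  have h1l'' : 1/(1/(1-l)) = 1-l := by
    field_simp
  rw [h1l', h1l''] at hHolder
  -- take logs
  have hlog := ENNReal.log_monotone hHolder
  rw [ENNReal.log_mul_add, ENNReal.log_rpow, ENNReal.log_rpow] at hlog
  have hKs : (∫⁻ z, ENNReal.ofReal (Real.exp (s * z)) ∂μ).log = (ks : EReal) := by
    rw [← hks]; unfold kappa; rw [if_pos hs]
  have hKt : (∫⁻ z, ENNReal.ofReal (Real.exp (t * z)) ∂μ).log = (kt : EReal) := by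
    rw [← hkt]; unfold kappa; rw [if_pos (by linarith : (0:ℝ) ≤ t)]
  rw [hKs, hKt] at hlog
  have hend : (l : EReal) * (ks : EReal) + ((1 - l : ℝ) : EReal) * (kt : EReal)
      = ((l * ks + (1-l) * kt : ℝ) : EReal) := by
    rw [← EReal.coe_mul, ← EReal.coe_mul, ← EReal.coe_add]
  have hku : kappa μ u = (∫⁻ z, ENNReal.ofReal (Real.exp (u * z)) ∂μ).log := by
    unfold kappa; rw [if_pos (by linarith : (0:ℝ) ≤ u)]
  have : kappa μ u ≤ ((l * ks + (1-l) * kt : ℝ) : EReal) := by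
    rw [hku, ← hend]; exact hlog
  convert this using 2
  rw [hl, h1l]; field_simp

lemma exists_tail_gt (μ : Measure ℝ) (a : ℝ≥0∞) (h : a < μ Set.univ) :
    ∃ c : ℝ, a < μ {z : ℝ | c ≤ z} := by
  by_contra hcon
  push_neg at hcon
  have hmono : Monotone (fun n : ℕ => {z : ℝ | -(n:ℝ) ≤ z}) := by
    intro n m hnm z hz
    simp only [Set.mem_setOf_eq] at *
    have : -(m:ℝ) ≤ -(n:ℝ) := by exact_mod_cast neg_le_neg (by exact_mod_cast hnm)
    linarith
  have hU : ⋃ n : ℕ, {z : ℝ | -(n:ℝ) ≤ z} = Set.univ := by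
    apply Set.eq_univ_of_forall
    intro z
    obtain ⟨n, hn⟩ := exists_nat_ge (-z)
    exact Set.mem_iUnion.2 ⟨n, by simp only [Set.mem_setOf_eq]; linarith⟩
  have hlim := tendsto_measure_iUnion_atTop (μ := μ) hmono
  have : μ (⋃ n : ℕ, {z : ℝ | -(n:ℝ) ≤ z}) ≤ a :=
    le_of_tendsto hlim (Filter.Eventually.of_forall fun n => hcon _)
  rw [hU] at this
  exact absurd h (not_lt.2 this)

/-- lower semicontinuity of kappa. -/
lemma kappa_lsc (μ : Measure ℝ) (p r : ℝ) (hr : (r : EReal) < kappa μ p) :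
    ∃ δ : ℝ, 0 < δ ∧ ∀ t : ℝ, |t - p| < δ → (r : EReal) < kappa μ t := by
  by_contra hcon
  push_neg at hcon
  choose T hT1 hT2 using fun n : ℕ => hcon (1/(n+1)) (by positivity)
  have hTlim : Tendsto T atTop (nhds p) := by
    rw [tendsto_iff_dist_tendsto_zero]
    apply squeeze_zero (fun n => dist_nonneg) (fun n => le_of_lt ?_)
      tendsto_one_div_add_atTop_nhds_zero_nat
    rw [Real.dist_eq]; exact hT1 n
  have hT0 : ∀ n, 0 ≤ T n := by
    intro n
    by_contra hneg
    push_neg at hneg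
    have : kappa μ (T n) = ⊤ := by simp [kappa, hneg]
    have h2 := hT2 n
    rw [this] at h2
    exact absurd h2 (by simp)
  have hp0 : 0 ≤ p := ge_of_tendsto hTlim (Filter.Eventually.of_forall hT0)
  have hTint : ∀ n, ∫⁻ z, ENNReal.ofReal (Real.exp (T n * z)) ∂μ ≤ ENNReal.ofReal (Real.exp r) := by
    intro n
    have := hT2 n
    unfold kappa at this
    rw [if_pos (hT0 n)] at this
    rw [← ENNReal.log_le_log_iff, ENNReal.log_ofReal_of_pos (Real.exp_pos _), Real.log_exp]
    exact this
  have key : ∫⁻ z, ENNReal.ofReal (Real.exp (p * z)) ∂μ ≤ ENNReal.ofReal (Real.exp r) := by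
    have heq : ∀ z : ℝ, ENNReal.ofReal (Real.exp (p * z)) =
        Filter.liminf (fun n => ENNReal.ofReal (Real.exp (T n * z))) atTop := by
      intro z
      exact (((ENNReal.continuous_ofReal.tendsto _).comp
        ((Real.continuous_exp.tendsto _).comp (hTlim.mul_const z))).liminf_eq).symm
    calc ∫⁻ z, ENNReal.ofReal (Real.exp (p * z)) ∂μ
        = ∫⁻ z, Filter.liminf (fun n => ENNReal.ofReal (Real.exp (T n * z))) atTop ∂μ :=
          lintegral_congr heq
      _ ≤ Filter.liminf (fun n => ∫⁻ z, ENNReal.ofReal (Real.exp (T n * z)) ∂μ) atTop :=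
          lintegral_liminf_le (fun n => measurable_ofReal_exp (T n))
      _ ≤ ENNReal.ofReal (Real.exp r) := by
          calc Filter.liminf (fun n => ∫⁻ z, ENNReal.ofReal (Real.exp (T n * z)) ∂μ) atTop
              ≤ Filter.liminf (fun _ : ℕ => ENNReal.ofReal (Real.exp r)) atTop :=
              Filter.liminf_le_liminf (Filter.Eventually.of_forall hTint)
            _ = _ := Filter.liminf_const _
  have : kappa μ p ≤ (r : EReal) := by
    unfold kappa
    rw [if_pos hp0]
    calc (∫⁻ z, ENNReal.ofReal (Real.exp (p * z)) ∂μ).log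
        ≤ (ENNReal.ofReal (Real.exp r)).log := ENNReal.log_monotone key
      _ = (r : EReal) := by rw [ENNReal.log_ofReal_of_pos (Real.exp_pos _), Real.log_exp]
  exact absurd hr (not_lt.2 this)

/-- Fenchel–Moreau biconjugation bound at a positive slope. -/
lemma fenchelMoreau (μ : Measure ℝ) [IsFiniteMeasure μ] (hμ : 0 < μ Set.univ) (p q : ℝ)
    (hp : 0 < p) (h : ∀ x : ℝ, ((p * x + q : ℝ) : EReal) ≤ kappaStar μ x) :
    kappa μ p ≤ ((-q : ℝ) : EReal) := by
  by_contra hcon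
  push_neg at hcon
  obtain ⟨r, hr1, hr2⟩ := EReal.exists_between_coe_real hcon
  suffices hle : r ≤ -q by
    exact absurd hr1 (not_lt.2 (by exact_mod_cast hle))
  obtain ⟨δ0, hδ0, hδ0p⟩ := kappa_lsc μ p r hr2
  set δ := min δ0 (p/2) with hδdef
  have hδpos : 0 < δ := lt_min hδ0 (by linarith)
  have hδle : ∀ t : ℝ, |t - p| < δ → (r : EReal) < kappa μ t := fun t ht =>
    hδ0p t (lt_of_lt_of_le ht (min_le_left _ _))
  obtain ⟨c, hc⟩ := exists_tail_gt μ 0 hμ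
  have hcfin : (μ {z : ℝ | c ≤ z}).log ≠ ⊤ := by
    simp only [ne_eq, ENNReal.log_eq_top_iff]; exact measure_ne_top μ _
  have hcbot : (μ {z : ℝ | c ≤ z}).log ≠ ⊥ := by
    simp only [ne_eq, ENNReal.log_eq_bot_iff]; exact ne_of_gt hc
  set C := ((μ {z : ℝ | c ≤ z}).log).toReal with hCdef
  have hCcoe : (μ {z : ℝ | c ≤ z}).log = (C : EReal) := (EReal.coe_toReal hcfin hcbot).symm
  have hlb : ∀ t k : ℝ, 0 ≤ t → kappa μ t = (k : ℝ) → t * c + C ≤ k := by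
    intro t k ht hk
    have h0 := kappa_tail_lb μ c t ht
    rw [hCcoe, hk, ← EReal.coe_add] at h0
    exact_mod_cast h0
  set SA := {y : ℝ | ∃ t : ℝ, t < p ∧ kappa μ t ≠ ⊤ ∧ y = (r - (kappa μ t).toReal)/(p - t)}
    with hSAdef
  set SB := {y : ℝ | ∃ t : ℝ, p < t ∧ kappa μ t ≠ ⊤ ∧ y = ((kappa μ t).toReal - r)/(t - p)}
    with hSBdef
  set u := |r - C - p*c|/δ with hudef
  have hu0 : 0 ≤ u := by positivity
  have huδ : u * δ = |r - C - p*c| := div_mul_cancel₀ _ (ne_of_gt hδpos)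
  set ub := u + |c| with hubdef
  set lb := min 0 (c - u) with hlbdef
  have hSAub : ∀ y ∈ SA, y ≤ ub := by
    rintro y ⟨t, htp, htop, rfl⟩
    have ht0 := kappa_nonneg_of_ne_top μ t htop
    set k := (kappa μ t).toReal with hkdef
    have hk : kappa μ t = (k : EReal) := (EReal.coe_toReal htop (kappa_ne_bot μ hμ t)).symm
    by_cases hclose : p - t < δ
    · have hrk : (r : EReal) < kappa μ t := by
        apply hδle t
        rw [abs_sub_comm, abs_of_pos (by linarith : 0 < p - t)]
        exact hclose
      rw [hk] at hrk
      have : r < k := by exact_mod_cast hrk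
      have h1 : (r - k)/(p - t) ≤ 0 :=
        div_nonpos_of_nonpos_of_nonneg (by linarith) (by linarith)
      have : (0:ℝ) ≤ ub := by positivity
      linarith
    · have hfar : δ ≤ p - t := not_lt.1 hclose
      have hk_lb : t*c + C ≤ k := hlb t k ht0 hk
      rw [div_le_iff₀ (by linarith : (0:ℝ) < p - t)]
      have h1 : u * δ ≤ u * (p - t) := mul_le_mul_of_nonneg_left hfar hu0
      have h2 : c * (p - t) ≤ |c| * (p - t) :=
        mul_le_mul_of_nonneg_right (le_abs_self c) (by linarith)
      have h3 : r - C - p*c ≤ |r - C - p*c| := le_abs_self _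
      nlinarith [h1, h2, h3, huδ, hk_lb]
  have hSBlb : ∀ y ∈ SB, lb ≤ y := by
    rintro y ⟨t, hpt, htop, rfl⟩
    have ht0 := kappa_nonneg_of_ne_top μ t htop
    set k := (kappa μ t).toReal with hkdef
    have hk : kappa μ t = (k : EReal) := (EReal.coe_toReal htop (kappa_ne_bot μ hμ t)).symm
    by_cases hclose : t - p < δ
    · have hrk : (r : EReal) < kappa μ t := by
        apply hδle t
        rw [abs_of_pos (by linarith : 0 < t - p)]
        exact hclose
      rw [hk] at hrk
      have : r < k := by exact_mod_cast hrk
      have h1 : (0:ℝ) ≤ (k - r)/(t - p) := div_nonneg (by linarith) (by linarith)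
      have h2 : lb ≤ 0 := min_le_left _ _
      linarith
    · have hfar : δ ≤ t - p := not_lt.1 hclose
      have hk_lb : t*c + C ≤ k := hlb t k ht0 hk
      have h2 : lb ≤ c - u := min_le_right _ _
      have htp : (0:ℝ) < t - p := by linarith
      rw [le_div_iff₀ htp]
      have h1 : u * δ ≤ u * (t - p) := mul_le_mul_of_nonneg_left hfar hu0
      have h3 : r - C - p*c ≤ |r - C - p*c| := le_abs_self _
      have h4 : lb * (t-p) ≤ (c - u) * (t-p) := mul_le_mul_of_nonneg_right h2 (le_of_lt htp)
      nlinarith [h1, h3, h4, huδ, hk_lb]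
  have hAB : ∀ yA ∈ SA, ∀ yB ∈ SB, yA ≤ yB := by
    rintro yA ⟨s, hsp, hstop, rfl⟩ yB ⟨t, hpt, httop, rfl⟩
    have hs0 := kappa_nonneg_of_ne_top μ s hstop
    set ks := (kappa μ s).toReal with hksdef
    set kt := (kappa μ t).toReal with hktdef
    have hks : kappa μ s = (ks : EReal) := (EReal.coe_toReal hstop (kappa_ne_bot μ hμ s)).symm
    have hkt : kappa μ t = (kt : EReal) := (EReal.coe_toReal httop (kappa_ne_bot μ hμ t)).symm
    have hch := kappa_chord μ s p t ks kt hs0 hsp hpt hks hkt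
    have hch2 : (r : EReal) < ((((t - p) * ks + (p - s) * kt) / (t - s) : ℝ) : EReal) :=
      lt_of_lt_of_le hr2 hch
    have hch3 : r < ((t - p) * ks + (p - s) * kt) / (t - s) := by exact_mod_cast hch2
    rw [lt_div_iff₀ (by linarith : (0:ℝ) < t - s)] at hch3
    rw [div_le_div_iff₀ (by linarith : (0:ℝ) < p - s) (by linarith : (0:ℝ) < t - p)]
    nlinarith [hch3]
  have hbdd : BddAbove (insert lb SA) := by
    refine ⟨max ub lb, ?_⟩
    rintro z (rfl | hz)
    · exact le_max_right _ _
    · exact le_trans (hSAub z hz) (le_max_left _ _)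
  set x := sSup (insert lb SA) with hxdef
  have hxA : ∀ y ∈ SA, y ≤ x := fun y hy => le_csSup hbdd (Set.mem_insert_of_mem _ hy)
  have hxB : ∀ y ∈ SB, x ≤ y := by
    intro y hy
    apply csSup_le (Set.insert_nonempty _ _)
    rintro z (rfl | hz)
    · exact hSBlb y hy
    · exact hAB z hz y hy
  have hstar : kappaStar μ x ≤ ((p*x - r : ℝ) : EReal) := by
    apply iSup_le
    intro t
    by_cases htop : kappa μ t = ⊤
    · rw [htop]
      have : ((t*x : ℝ) : EReal) - ⊤ = ⊥ := by simp
      rw [this]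
      exact bot_le
    · have ht0 := kappa_nonneg_of_ne_top μ t htop
      set k := (kappa μ t).toReal with hkdef
      have hk : kappa μ t = (k : EReal) := (EReal.coe_toReal htop (kappa_ne_bot μ hμ t)).symm
      rw [hk, ← EReal.coe_sub]
      apply EReal.coe_le_coe_iff.2
      rcases lt_trichotomy t p with hlt | heq | hgt
      · have hmem : (r - k)/(p - t) ∈ SA := ⟨t, hlt, htop, rfl⟩
        have h5 := hxA _ hmem
        rw [div_le_iff₀ (by linarith : (0:ℝ) < p - t)] at h5
        nlinarith [h5]
      · subst heq
        have h6 : (r : EReal) < (k : EReal) := by rw [← hk]; exact hr2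
        have : r < k := by exact_mod_cast h6
        linarith
      · have hmem : (k - r)/(t - p) ∈ SB := ⟨t, hgt, htop, rfl⟩
        have h5 := hxB _ hmem
        rw [le_div_iff₀ (by linarith : (0:ℝ) < t - p)] at h5
        nlinarith [h5]
  have hfin := le_trans (h x) hstar
  have : p*x + q ≤ p*x - r := by exact_mod_cast hfin
  linarith

set_option maxHeartbeats 2000000 in
/-- key lemma: a minorant line of the swept dual with positive value at `b'`
yields a ν-witness slope `φ ≤ p`. -/
lemma crux (μν : Measure ℝ) [IsFiniteMeasure μν] (hν : 1 < μν Set.univ)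
    (φν : ℝ) (hφν : 0 < φν) (hφνfin : kappa μν φν ≠ ⊤)
    (p q b' : ℝ) (hp : 0 < p)
    (hνline : ∀ x : ℝ, kappaStar μν x ≤ 0 → ((p * x + q : ℝ) : EReal) ≤ kappaStar μν x)
    (hb' : 0 < p * b' + q) :
    ∃ φ : ℝ, 0 < φ ∧ φ ≤ p ∧ kappa μν φ ≤ ((φ * b' : ℝ) : EReal) := by
  have hμν0 : 0 < μν Set.univ := lt_trans zero_lt_one hν
  by_contra hhard
  push_neg at hhard
  -- hhard : ∀ φ, 0 < φ → φ ≤ p → ((φ*b' : ℝ):EReal) < kappa μν φ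
  -- tail constant with measure > 1
  obtain ⟨c1, hc1⟩ := exists_tail_gt μν 1 hν
  have hc1fin : (μν {z : ℝ | c1 ≤ z}).log ≠ ⊤ := by
    simp only [ne_eq, ENNReal.log_eq_top_iff]; exact measure_ne_top μν _
  have hc1bot : (μν {z : ℝ | c1 ≤ z}).log ≠ ⊥ := by
    simp only [ne_eq, ENNReal.log_eq_bot_iff]
    exact ne_of_gt (lt_trans zero_lt_one hc1)
  set C1 := ((μν {z : ℝ | c1 ≤ z}).log).toReal with hC1def
  have hC1coe : (μν {z : ℝ | c1 ≤ z}).log = (C1 : EReal) := (EReal.coe_toReal hc1fin hc1bot).symm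
  have hC1pos : 0 < C1 := by
    have : (0 : EReal) < (μν {z : ℝ | c1 ≤ z}).log := by
      rw [ENNReal.zero_lt_log_iff]; exact hc1
    rw [hC1coe] at this
    exact_mod_cast this
  have hlb1 : ∀ t k : ℝ, 0 ≤ t → kappa μν t = (k : ℝ) → t * c1 + C1 ≤ k := by
    intro t k ht hk
    have h0 := kappa_tail_lb μν c1 t ht
    rw [hC1coe, hk, ← EReal.coe_add] at h0
    exact_mod_cast h0
  -- k0 := kappa at 0
  have hk0fin : kappa μν 0 ≠ ⊤ := by
    rw [kappa_zero]
    simp only [ne_eq, ENNReal.log_eq_top_iff]; exact measure_ne_top μν _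
  set k0 := (kappa μν 0).toReal with hk0def
  have hk0coe : kappa μν 0 = (k0 : EReal) := (EReal.coe_toReal hk0fin (kappa_ne_bot μν hμν0 0)).symm
  have hk0pos : 0 < k0 := by
    have : (0 : EReal) < kappa μν 0 := by
      rw [kappa_zero, ENNReal.zero_lt_log_iff]; exact hν
    rw [hk0coe] at this
    exact_mod_cast this
  -- the set of ratio values and its infimum aν
  set A := {y : ℝ | ∃ t : ℝ, 0 < t ∧ kappa μν t ≠ ⊤ ∧ y = (kappa μν t).toReal / t} with hAdef
  have hAne : A.Nonempty := ⟨(kappa μν φν).toReal / φν, φν, hφν, hφνfin, rfl⟩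
  have hAbdd : BddBelow A := by
    refine ⟨c1, ?_⟩
    rintro y ⟨t, ht, htop, rfl⟩
    have hk : kappa μν t = ((kappa μν t).toReal : EReal) :=
      (EReal.coe_toReal htop (kappa_ne_bot μν hμν0 t)).symm
    have := hlb1 t (kappa μν t).toReal (le_of_lt ht) hk
    rw [le_div_iff₀ ht]
    nlinarith
  set aν := sInf A with haνdef
  have hstar_aν : kappaStar μν aν ≤ 0 := by
    apply iSup_le
    intro t
    by_cases htop : kappa μν t = ⊤
    · rw [htop]
      have h1 : ((t * aν : ℝ) : EReal) - ⊤ = ⊥ := by simp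
      rw [h1]; exact bot_le
    · have ht0 := kappa_nonneg_of_ne_top μν t htop
      set k := (kappa μν t).toReal with hkdef
      have hk : kappa μν t = (k : EReal) := (EReal.coe_toReal htop (kappa_ne_bot μν hμν0 t)).symm
      rw [hk, ← EReal.coe_sub]
      have : t * aν - k ≤ 0 := by
        rcases eq_or_lt_of_le ht0 with h0 | htpos
        · have ht00 : t = 0 := h0.symm
          subst ht00
          have hkk : k = k0 := by rw [hkdef, hk0def]
          nlinarith
        · have : aν ≤ k / t := csInf_le hAbdd ⟨t, htpos, htop, rfl⟩
          rw [le_div_iff₀ htpos] at this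
          nlinarith
      exact_mod_cast this
  have hline_aν : p * aν + q ≤ 0 := by
    have := le_trans (hνline aν hstar_aν) hstar_aν
    exact_mod_cast this
  have haνb' : aν < b' := by nlinarith
  set δ := b' - aν with hδdef
  have hδpos : 0 < δ := by rw [hδdef]; linarith
  have haν : aν = b' - δ := by rw [hδdef]; ring
  -- approximate minimizers
  have hwitness : ∀ ε : ℝ, 0 < ε → ∃ t : ℝ, 0 < t ∧ kappa μν t ≠ ⊤ ∧
      (kappa μν t).toReal < (aν + ε) * t := by
    intro ε hε
    obtain ⟨y, hyA, hy⟩ := exists_lt_of_csInf_lt hAne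
      (show sInf A < aν + ε by rw [← haνdef]; linarith)
    obtain ⟨t, ht, htop, rfl⟩ := hyA
    refine ⟨t, ht, htop, ?_⟩
    rw [div_lt_iff₀ ht] at hy
    linarith
  have hwit_gt_p : ∀ ε : ℝ, 0 < ε → ε ≤ δ → ∀ t : ℝ, 0 < t → kappa μν t ≠ ⊤ →
      (kappa μν t).toReal < (aν + ε) * t → p < t := by
    intro ε hε hεδ t ht htop hkt
    by_contra hle
    push_neg at hle
    have hk : kappa μν t = ((kappa μν t).toReal : EReal) :=
      (EReal.coe_toReal htop (kappa_ne_bot μν hμν0 t)).symm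
    have := hhard t ht hle
    rw [hk] at this
    have h2 : t * b' < (kappa μν t).toReal := by exact_mod_cast this
    nlinarith
  clear_value aν
  clear_value δ
  -- Claim 1 : kappa μν s ≥ s b' + (p - s) δ for 0 ≤ s ≤ p
  have claim1 : ∀ s k : ℝ, 0 ≤ s → s ≤ p → kappa μν s = (k : ℝ) → s * b' + (p - s) * δ ≤ k := by
    intro s k hs0 hsp hk
    rcases eq_or_lt_of_le hsp with heq | hslt
    · rw [heq] at hk ⊢
      have h1 := hhard p hp le_rfl
      rw [hk] at h1
      have h2 : p * b' < k := by exact_mod_cast h1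
      nlinarith
    · by_contra hcon
      push_neg at hcon
      set ε0 := (s * b' + (p - s) * δ - k) / (p - s) with hε0def
      have hε0pos : 0 < ε0 := div_pos (by linarith) (by linarith)
      set ε := min δ (ε0 / 2) with hεdef
      have hεpos : 0 < ε := lt_min hδpos (by linarith)
      have hεδ : ε ≤ δ := min_le_left _ _
      have hεε0 : ε < ε0 := lt_of_le_of_lt (min_le_right _ _) (by linarith)
      obtain ⟨t', ht'0, ht'top, ht'k⟩ := hwitness ε hεpos
      have hpt' : p < t' := hwit_gt_p ε hεpos hεδ t' ht'0 ht'top ht'k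
      set kt' := (kappa μν t').toReal with hkt'def
      have hkt' : kappa μν t' = (kt' : EReal) :=
        (EReal.coe_toReal ht'top (kappa_ne_bot μν hμν0 t')).symm
      have hch := kappa_chord μν s p t' k kt' hs0 hslt hpt' hk hkt'
      have hhp := hhard p hp le_rfl
      have hch2 : ((p * b' : ℝ) : EReal) < ((((t' - p) * k + (p - s) * kt') / (t' - s) : ℝ) : EReal) :=
        lt_of_lt_of_le hhp hch
      have hch3 : p * b' < ((t' - p) * k + (p - s) * kt') / (t' - s) := by exact_mod_cast hch2
      rw [lt_div_iff₀ (by linarith : (0:ℝ) < t' - s)] at hch3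
      -- k < s b' + (p-s)(δ - ε) from hcon, hεε0
      have hcon2 : k < s * b' + (p - s) * (δ - ε) := by
        have hlt : (p - s) * ε < (p - s) * ε0 := by
          apply mul_lt_mul_of_pos_left hεε0 (by linarith)
        have hε0eq : ε0 * (p - s) = s * b' + (p - s) * δ - k := by
          rw [hε0def]; exact div_mul_cancel₀ _ (by linarith)
        nlinarith
      rw [haν] at ht'k
      nlinarith [mul_lt_mul_of_pos_left hcon2 (by linarith : (0:ℝ) < t' - p),
        mul_lt_mul_of_pos_left ht'k (by linarith : (0:ℝ) < p - s),
        mul_nonneg (mul_nonneg (by linarith : (0:ℝ) ≤ p - s) (by linarith : (0:ℝ) ≤ δ - ε)) hp.le]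
  -- the set of right difference quotients
  set SB := {y : ℝ | ∃ t : ℝ, p < t ∧ kappa μν t ≠ ⊤ ∧
      y = (t * b' - (kappa μν t).toReal) / (t - p)} with hSBdef
  have hSBchord : ∀ y ∈ SB, ∀ s k : ℝ, 0 ≤ s → s < p → kappa μν s = (k : ℝ) →
      y ≤ (k - s * b') / (p - s) := by
    rintro y ⟨t, hpt, htop, rfl⟩ s k hs0 hsp hks
    set kt := (kappa μν t).toReal with hktdef
    have hkt : kappa μν t = (kt : EReal) := (EReal.coe_toReal htop (kappa_ne_bot μν hμν0 t)).symm
    have hch := kappa_chord μν s p t k kt hs0 hsp hpt hks hkt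
    have hhp := hhard p hp le_rfl
    have hch2 : ((p * b' : ℝ) : EReal) < ((((t - p) * k + (p - s) * kt) / (t - s) : ℝ) : EReal) :=
      lt_of_lt_of_le hhp hch
    have hch3 : p * b' < ((t - p) * k + (p - s) * kt) / (t - s) := by exact_mod_cast hch2
    rw [lt_div_iff₀ (by linarith : (0:ℝ) < t - s)] at hch3
    rw [div_le_div_iff₀ (by linarith : (0:ℝ) < t - p) (by linarith : (0:ℝ) < p - s)]
    nlinarith
  have hSBbdd : BddAbove SB := by
    refine ⟨(k0 - 0 * b') / (p - 0), ?_⟩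
    intro y hy
    exact hSBchord y hy 0 k0 le_rfl hp hk0coe
  set σ := sSup (insert δ SB) with hσdef
  have hσδ : δ ≤ σ := le_csSup (hSBbdd.insert δ) (Set.mem_insert _ _)
  have hσpos : 0 < σ := lt_of_lt_of_le hδpos hσδ
  have hσup : ∀ s k : ℝ, 0 ≤ s → s < p → kappa μν s = (k : ℝ) → σ ≤ (k - s * b') / (p - s) := by
    intro s k hs0 hsp hks
    apply csSup_le (Set.insert_nonempty _ _)
    rintro z (rfl | hz)
    · rw [le_div_iff₀ (by linarith : (0:ℝ) < p - s)]
      have := claim1 s k hs0 (le_of_lt hsp) hks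
      nlinarith
    · exact hSBchord z hz s k hs0 hsp hks
  have hσSB : ∀ y ∈ SB, y ≤ σ := fun y hy => le_csSup (hSBbdd.insert δ) (Set.mem_insert_of_mem _ hy)
  set x := b' - σ with hxdef
  clear_value σ
  clear_value x
  have hstarx : kappaStar μν x ≤ ((p * x - p * b' : ℝ) : EReal) := by
    apply iSup_le
    intro t
    by_cases htop : kappa μν t = ⊤
    · rw [htop]
      have h1 : ((t * x : ℝ) : EReal) - ⊤ = ⊥ := by simp
      rw [h1]; exact bot_le
    · have ht0 := kappa_nonneg_of_ne_top μν t htop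
      set k := (kappa μν t).toReal with hkdef
      have hk : kappa μν t = (k : EReal) := (EReal.coe_toReal htop (kappa_ne_bot μν hμν0 t)).symm
      clear_value k
      rw [hk, ← EReal.coe_sub]
      apply EReal.coe_le_coe_iff.2
      rcases lt_trichotomy t p with hlt | heq | hgt
      · have h5 := hσup t k ht0 hlt hk
        rw [le_div_iff₀ (by linarith : (0:ℝ) < p - t)] at h5
        nlinarith
      · subst heq
        have h5 := claim1 t k ht0 le_rfl hk
        nlinarith
      · have hmem : (t * b' - k) / (t - p) ∈ SB := ⟨t, hgt, htop, by rw [hkdef]⟩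
        have h5 := hσSB _ hmem
        rw [div_le_iff₀ (by linarith : (0:ℝ) < t - p)] at h5
        nlinarith
  have hstarx0 : kappaStar μν x ≤ 0 := by
    refine le_trans hstarx ?_
    have : p * x - p * b' ≤ 0 := by nlinarith
    exact_mod_cast this
  have hfin := le_trans (hνline x hstarx0) hstarx
  have hfin2 : p * x + q ≤ p * x - p * b' := by exact_mod_cast hfin
  linarith

end AnomalousAux

open AnomalousAux

set_option maxHeartbeats 1000000 in
/-- The two formulae for the anomalous spreading speed agree: with
`r = (cv((κ*_ν)°, κ*_η))°`,
`sup {a : r(a) < 0} = inf {max (κ_ν(φ)/φ) (κ_η(θ)/θ) : 0 < φ ≤ θ}`. -/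
theorem anomalous_speed_formulae_agree (μν μη : Measure ℝ)
    [IsFiniteMeasure μν] [IsFiniteMeasure μη]
    (hν : 1 < μν Set.univ) (hη : 0 < μη Set.univ)
    (hφ : ∃ φν φη : ℝ, 0 < φν ∧ φν ≤ φη ∧ kappa μν φν < ⊤ ∧ kappa μη φη < ⊤) :
    (⨆ a ∈ {a : ℝ |
        sweep (cvMinorant (sweep (kappaStar μν)) (kappaStar μη)) a < 0}, (a : EReal)) =
      ⨅ (φ : ℝ) (θ : ℝ) (_ : 0 < φ) (_ : φ ≤ θ),
        max (kappa μν φ / (φ : EReal)) (kappa μη θ / (θ : EReal)) := by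
  obtain ⟨φν, φη, hφν0, hφνη, hφνfin, hφηfin⟩ := hφ
  have hμν0 : 0 < μν Set.univ := lt_trans zero_lt_one hν
  apply le_antisymm
  · -- LHS ≤ RHS
    apply iSup₂_le
    intro a ha
    simp only [Set.mem_setOf_eq] at ha
    have hca : cvMinorant (sweep (kappaStar μν)) (kappaStar μη) a < 0 := by
      by_cases h : cvMinorant (sweep (kappaStar μν)) (kappaStar μη) a ≤ 0
      · rwa [sweep, if_pos h] at ha
      · rw [sweep, if_neg h] at ha; exact absurd ha not_top_lt
    refine le_iInf fun φ => le_iInf fun θ => le_iInf fun hφ0 => le_iInf fun hφθ => ?_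
    have hθ0 : 0 < θ := lt_of_lt_of_le hφ0 hφθ
    by_cases hνtop : kappa μν φ = ⊤
    · rw [hνtop]
      have hd : (⊤ : EReal) / (φ : EReal) = ⊤ :=
        EReal.top_div_of_pos_ne_top (by exact_mod_cast hφ0) (EReal.coe_ne_top φ)
      rw [hd]
      exact le_trans le_top (le_max_left _ _)
    by_cases hηtop : kappa μη θ = ⊤
    · rw [hηtop]
      have hd : (⊤ : EReal) / (θ : EReal) = ⊤ :=
        EReal.top_div_of_pos_ne_top (by exact_mod_cast hθ0) (EReal.coe_ne_top θ)
      rw [hd]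
      exact le_trans le_top (le_max_right _ _)
    set kν := (kappa μν φ).toReal with hkνdef
    set kη := (kappa μη θ).toReal with hkηdef
    have hkν : kappa μν φ = (kν : EReal) := (EReal.coe_toReal hνtop (kappa_ne_bot μν hμν0 φ)).symm
    have hkη : kappa μη θ = (kη : EReal) := (EReal.coe_toReal hηtop (kappa_ne_bot μη hη θ)).symm
    clear_value kν kη
    set M := max (kν/φ) (kη/θ) with hMdef
    by_contra habs
    push_neg at habs
    have h1 : kν / φ < a := by
      have := lt_of_le_of_lt (le_max_left (kappa μν φ / (φ:EReal)) (kappa μη θ / (θ:EReal))) habs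
      rw [hkν, ← EReal.coe_div] at this
      exact_mod_cast this
    have h2 : kη / θ < a := by
      have := lt_of_le_of_lt (le_max_right (kappa μν φ / (φ:EReal)) (kappa μη θ / (θ:EReal))) habs
      rw [hkη, ← EReal.coe_div] at this
      exact_mod_cast this
    have hMa : M < a := by rw [hMdef]; exact max_lt h1 h2
    have hkνM : kν ≤ φ * M := by
      have : kν / φ ≤ M := le_max_left _ _
      rw [div_le_iff₀ hφ0] at this
      linarith
    have hkηM : kη ≤ θ * M := by
      have : kη / θ ≤ M := le_max_right _ _
      rw [div_le_iff₀ hθ0] at this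
      linarith
    have hmin : ∀ x : ℝ, ((θ * x + -(θ*M) : ℝ) : EReal) ≤
        min (sweep (kappaStar μν) x) (kappaStar μη x) := by
      intro x
      refine le_min ?_ ?_
      · by_cases hx : kappaStar μν x ≤ 0
        · rw [sweep, if_pos hx]
          have hxφ : ((φ * x - kν : ℝ) : EReal) ≤ kappaStar μν x := by
            have hle := le_iSup (fun t : ℝ => ((t * x : ℝ) : EReal) - kappa μν t) φ
            rw [hkν, ← EReal.coe_sub] at hle
            exact hle
          have hxM : φ * x - kν ≤ 0 := by
            have := le_trans hxφ hx
            exact_mod_cast this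
          have hxM2 : x ≤ M := by nlinarith
          refine le_trans ?_ hxφ
          apply EReal.coe_le_coe_iff.2
          nlinarith [mul_nonneg (by linarith : (0:ℝ) ≤ θ - φ) (by linarith : (0:ℝ) ≤ M - x)]
        · rw [sweep, if_neg hx]; exact le_top
      · have hle := le_iSup (fun t : ℝ => ((t * x : ℝ) : EReal) - kappa μη t) θ
        rw [hkη, ← EReal.coe_sub] at hle
        refine le_trans ?_ hle
        apply EReal.coe_le_coe_iff.2
        nlinarith
    have hcv : ((θ * a + -(θ*M) : ℝ) : EReal) ≤
        cvMinorant (sweep (kappaStar μν)) (kappaStar μη) a :=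
      le_iSup_of_le θ (le_iSup_of_le (-(θ*M)) (le_iSup_of_le hmin le_rfl))
    have hpos : (0 : EReal) < ((θ * a + -(θ*M) : ℝ) : EReal) := by
      have : (0:ℝ) < θ * a + -(θ*M) := by nlinarith
      exact_mod_cast this
    exact absurd (lt_trans (lt_of_lt_of_le hpos hcv) hca) (lt_irrefl 0)
  · -- RHS ≤ LHS
    by_contra hcon
    push_neg at hcon
    obtain ⟨b, hbL, hbR⟩ := EReal.exists_between_coe_real hcon
    obtain ⟨b', hbb', hb'R⟩ := EReal.exists_between_coe_real hbR
    have hb'b : b < b' := by exact_mod_cast hbb'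
    obtain ⟨c0, hc0⟩ := exists_tail_gt μν 1 hν
    have hc0fin : (μν {z : ℝ | c0 ≤ z}).log ≠ ⊤ := by
      simp only [ne_eq, ENNReal.log_eq_top_iff]; exact measure_ne_top μν _
    have hc0bot : (μν {z : ℝ | c0 ≤ z}).log ≠ ⊥ := by
      simp only [ne_eq, ENNReal.log_eq_bot_iff]
      exact ne_of_gt (lt_trans zero_lt_one hc0)
    set C0 := ((μν {z : ℝ | c0 ≤ z}).log).toReal with hC0def
    have hC0coe : (μν {z : ℝ | c0 ≤ z}).log = (C0 : EReal) := (EReal.coe_toReal hc0fin hc0bot).symm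
    have hC0pos : 0 < C0 := by
      have h0 : (0 : EReal) < (μν {z : ℝ | c0 ≤ z}).log := by
        rw [ENNReal.zero_lt_log_iff]; exact hc0
      rw [hC0coe] at h0
      exact_mod_cast h0
    clear_value C0
    have hlb0 : ∀ t k : ℝ, 0 ≤ t → kappa μν t = (k : ℝ) → t * c0 + C0 ≤ k := by
      intro t k ht hk
      have h0 := kappa_tail_lb μν c0 t ht
      rw [hC0coe, hk, ← EReal.coe_add] at h0
      exact_mod_cast h0
    set a0 := min c0 (b - 1) with ha0def
    have ha0b : a0 < b := lt_of_le_of_lt (min_le_right _ _) (by linarith)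
    have ha0c0 : a0 ≤ c0 := min_le_left _ _
    clear_value a0
    have hstar_a0 : kappaStar μν a0 ≤ ((-C0 : ℝ) : EReal) := by
      apply iSup_le
      intro t
      by_cases htop : kappa μν t = ⊤
      · rw [htop]
        have h1 : ((t * a0 : ℝ) : EReal) - ⊤ = ⊥ := by simp
        rw [h1]; exact bot_le
      · have ht0 := kappa_nonneg_of_ne_top μν t htop
        set k := (kappa μν t).toReal with hkdef
        have hk : kappa μν t = (k : EReal) :=
          (EReal.coe_toReal htop (kappa_ne_bot μν hμν0 t)).symm
        clear_value k
        rw [hk, ← EReal.coe_sub]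
        apply EReal.coe_le_coe_iff.2
        have h5 := hlb0 t k ht0 hk
        have h6 : t * a0 ≤ t * c0 := mul_le_mul_of_nonneg_left ha0c0 ht0
        linarith
    have hkey : ∀ p q : ℝ,
        (∀ x : ℝ, ((p * x + q : ℝ) : EReal) ≤
          min (sweep (kappaStar μν) x) (kappaStar μη x)) →
        p * a0 + q ≤ -C0 ∧ p * b' + q ≤ 0 := by
      intro p q hmin
      have h1 : p * a0 + q ≤ -C0 := by
        have hle := le_trans (hmin a0) (min_le_left _ _)
        have hsw : sweep (kappaStar μν) a0 = kappaStar μν a0 := by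
          rw [sweep, if_pos (le_trans hstar_a0 (by exact_mod_cast (by linarith : -C0 ≤ (0:ℝ))))]
        rw [hsw] at hle
        have := le_trans hle hstar_a0
        exact_mod_cast this
      refine ⟨h1, ?_⟩
      by_contra hpos
      push_neg at hpos
      rcases le_or_gt p 0 with hp0 | hp0
      · have h2 : p * b' ≤ p * a0 := mul_le_mul_of_nonpos_left (by linarith : a0 ≤ b') hp0
        nlinarith
      · have hηle : ∀ x : ℝ, ((p * x + q : ℝ) : EReal) ≤ kappaStar μη x :=
          fun x => le_trans (hmin x) (min_le_right _ _)
        have hFM := fenchelMoreau μη hη p q hp0 hηle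
        have hνl : ∀ x : ℝ, kappaStar μν x ≤ 0 → ((p * x + q : ℝ) : EReal) ≤ kappaStar μν x := by
          intro x hx
          have hle := le_trans (hmin x) (min_le_left _ _)
          rwa [sweep, if_pos hx] at hle
        obtain ⟨φ, hφ0, hφp, hφb⟩ :=
          crux μν hν φν hφν0 (ne_of_lt hφνfin) p q b' hp0 hνl hpos
        have hRle : (⨅ (φ : ℝ) (θ : ℝ) (_ : 0 < φ) (_ : φ ≤ θ),
            max (kappa μν φ / (φ : EReal)) (kappa μη θ / (θ : EReal))) ≤ (b' : EReal) := by
          refine le_trans (iInf_le _ φ) ?_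
          refine le_trans (iInf_le _ p) ?_
          refine le_trans (iInf_le _ hφ0) ?_
          refine le_trans (iInf_le _ hφp) ?_
          apply max_le
          · rw [EReal.div_le_iff_le_mul (by exact_mod_cast hφ0) (EReal.coe_ne_top φ)]
            refine le_trans hφb (le_of_eq (EReal.coe_mul φ b'))
          · rw [EReal.div_le_iff_le_mul (by exact_mod_cast hp0) (EReal.coe_ne_top p)]
            refine le_trans hFM ?_
            rw [← EReal.coe_mul]
            exact_mod_cast (by nlinarith : -q ≤ p * b')
        exact absurd (lt_of_lt_of_le hb'R hRle) (lt_irrefl _)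
    set lam := (b' - b)/(b' - a0) with hlamdef
    have hba0 : 0 < b' - a0 := by linarith
    have hlam0 : 0 < lam := div_pos (by linarith) hba0
    have hlam1 : lam < 1 := by rw [hlamdef, div_lt_one hba0]; linarith
    have hlameq : lam * (b' - a0) = b' - b := by
      rw [hlamdef]; exact div_mul_cancel₀ _ (ne_of_gt hba0)
    clear_value lam
    have hbeq : b = lam * a0 + (1 - lam) * b' := by linear_combination hlameq
    have hcvb : cvMinorant (sweep (kappaStar μν)) (kappaStar μη) b ≤ ((-(lam*C0) : ℝ) : EReal) := by
      apply iSup_le; intro p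
      apply iSup_le; intro q
      apply iSup_le; intro hmin
      obtain ⟨h1, h2⟩ := hkey p q hmin
      apply EReal.coe_le_coe_iff.2
      have h3 : p * b + q = lam * (p * a0 + q) + (1 - lam) * (p * b' + q) := by
        rw [hbeq]; ring
      nlinarith [mul_le_mul_of_nonneg_left h1 hlam0.le,
        mul_le_mul_of_nonneg_left h2 (by linarith : (0:ℝ) ≤ 1 - lam)]
    have hmem : b ∈ {a : ℝ |
        sweep (cvMinorant (sweep (kappaStar μν)) (kappaStar μη)) a < 0} := by
      simp only [Set.mem_setOf_eq]
      have hneg : ((-(lam*C0) : ℝ) : EReal) < 0 := by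
        exact_mod_cast (by nlinarith : -(lam*C0) < (0:ℝ))
      rw [sweep, if_pos (le_trans hcvb (le_of_lt hneg))]
      exact lt_of_le_of_lt hcvb hneg
    have hle := le_iSup₂ (f := fun (a : ℝ) (_ : a ∈ {a : ℝ |
        sweep (cvMinorant (sweep (kappaStar μν)) (kappaStar μη)) a < 0}) => (a : EReal)) b hmem
    exact absurd (lt_of_le_of_lt hle hbL) (lt_irrefl _)
end

section
/- Expected numbers of the second type in the reducible two-type branching random walk grow at rate governed by the convex minorant of the two duals: with ν_n = Σ_{m=0}^{n−1} μ_ν^{*m} ⋆ μ_c ⋆ μ_η^{*(n−1−m)} (where ⋆ is convolution of measures and μ^{*0} is the Dirac mass at 0), for every a ∈ ℝ, limsup_{n→∞} (1/n) log ν_n([na, ∞)) ≤ −cv(κ*_ν, κ*_η)(a), in the extended reals (with log 0 = −∞). -/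
open MeasureTheory Filter Topology

/-- The `n`-fold convolution power of a measure on `ℝ` (`μ^{*0}` is the Dirac
mass at `0`, and `μ^{*1} = μ`). -/
noncomputable def convPow (μ : Measure ℝ) : ℕ → Measure ℝ
  | 0 => Measure.dirac 0
  | n + 1 => Measure.conv (convPow μ n) μ

/-- Intensity measure of the `n`-th generation type-`η` particles in the
reducible two-type branching random walk started from one type-`ν` particle:
`ν_n = Σ_{m=0}^{n−1} μ_ν^{*m} ⋆ μ_c ⋆ μ_η^{*(n−1−m)}`. -/
noncomputable def etaIntensity (μν μc μη : Measure ℝ) (n : ℕ) : Measure ℝ :=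
  ∑ m ∈ Finset.range n,
    Measure.conv (Measure.conv (convPow μν m) μc) (convPow μη (n - 1 - m))

-- Auxiliary lemmas
noncomputable def Lt (μ : Measure ℝ) (θ : ℝ) : ENNReal :=
  ∫⁻ z, ENNReal.ofReal (Real.exp (θ * z)) ∂μ

lemma Lt_conv (μ ν : Measure ℝ) [SFinite μ] [SFinite ν] (θ : ℝ) :
    Lt (μ.conv ν) θ = Lt μ θ * Lt ν θ := by
  unfold Lt
  rw [Measure.conv, lintegral_map (by fun_prop) (by fun_prop), lintegral_prod _ (by fun_prop)]
  simp only [mul_add, Real.exp_add, ENNReal.ofReal_mul (Real.exp_nonneg _)]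
  rw [← lintegral_mul_const _ (by fun_prop)]
  congr 1
  ext x
  rw [lintegral_const_mul _ (by fun_prop)]

instance convPow_finite (μ : Measure ℝ) [IsFiniteMeasure μ] (n : ℕ) :
    IsFiniteMeasure (convPow μ n) := by
  induction n with
  | zero => exact inferInstanceAs (IsFiniteMeasure (Measure.dirac 0))
  | succ n ih => exact inferInstanceAs (IsFiniteMeasure (Measure.conv _ _))

lemma Lt_convPow (μ : Measure ℝ) [IsFiniteMeasure μ] (θ : ℝ) (n : ℕ) :
    Lt (convPow μ n) θ = (Lt μ θ) ^ n := by
  induction n with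
  | zero => simp [convPow, Lt, lintegral_dirac]
  | succ n ih => rw [convPow, Lt_conv, ih, pow_succ]

lemma chernoff (ρ : Measure ℝ) (θ t : ℝ) (hθ : 0 ≤ θ) :
    ρ (Set.Ici t) ≤ ENNReal.ofReal (Real.exp (-(θ * t))) * Lt ρ θ := by
  have h1 : ENNReal.ofReal (Real.exp (θ * t)) * ρ (Set.Ici t) ≤ Lt ρ θ := by
    rw [← setLIntegral_const]
    refine le_trans (setLIntegral_mono (by fun_prop) ?_) (setLIntegral_le_lintegral _ _)
    intro z hz
    exact ENNReal.ofReal_le_ofReal (Real.exp_le_exp.2 (mul_le_mul_of_nonneg_left hz hθ))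
  calc ρ (Set.Ici t) = ENNReal.ofReal (Real.exp (-(θ * t))) *
        (ENNReal.ofReal (Real.exp (θ * t)) * ρ (Set.Ici t)) := by
        rw [← mul_assoc, ← ENNReal.ofReal_mul (Real.exp_nonneg _), ← Real.exp_add]
        simp
    _ ≤ _ := by gcongr

lemma eta_bound (μν μη μc : Measure ℝ)
    [IsFiniteMeasure μν] [IsFiniteMeasure μη] [IsFiniteMeasure μc]
    (θ b γ : ℝ) (hθ : 0 ≤ θ)
    (hν : Lt μν θ ≤ ENNReal.ofReal (Real.exp b))
    (hη : Lt μη θ ≤ ENNReal.ofReal (Real.exp b))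
    (hc : Lt μc θ ≤ ENNReal.ofReal (Real.exp γ))
    (n : ℕ) (t : ℝ) :
    (etaIntensity μν μc μη n) (Set.Ici t) ≤
      n * ENNReal.ofReal (Real.exp (-(θ * t) + γ + b * (n - 1 : ℕ))) := by
  have key : ∀ m ∈ Finset.range n,
      (Measure.conv (Measure.conv (convPow μν m) μc) (convPow μη (n - 1 - m)))
        (Set.Ici t) ≤ ENNReal.ofReal (Real.exp (-(θ * t) + γ + b * (n - 1 : ℕ))) := by
    intro m hm
    refine le_trans (chernoff _ θ t hθ) ?_
    rw [Lt_conv, Lt_conv, Lt_convPow, Lt_convPow]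
    have hmn : m + (n - 1 - m) = n - 1 := by
      have := Finset.mem_range.1 hm; omega
    calc ENNReal.ofReal (Real.exp (-(θ * t))) * (Lt μν θ ^ m * Lt μc θ * Lt μη θ ^ (n - 1 - m))
        ≤ ENNReal.ofReal (Real.exp (-(θ * t))) *
          ((ENNReal.ofReal (Real.exp b)) ^ m * ENNReal.ofReal (Real.exp γ) *
            (ENNReal.ofReal (Real.exp b)) ^ (n - 1 - m)) := by gcongr
      _ = ENNReal.ofReal (Real.exp (-(θ * t) + γ + b * (n - 1 : ℕ))) := by
          rw [← ENNReal.ofReal_pow (Real.exp_nonneg _), ← ENNReal.ofReal_pow (Real.exp_nonneg _),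
            ← ENNReal.ofReal_mul (by positivity), ← ENNReal.ofReal_mul (by positivity),
            ← ENNReal.ofReal_mul (by positivity), ← Real.exp_nat_mul, ← Real.exp_nat_mul,
            ← Real.exp_add, ← Real.exp_add, ← Real.exp_add]
          have hmn' : ((m : ℝ) + ((n - 1 - m : ℕ) : ℝ)) = ((n - 1 : ℕ) : ℝ) := by
            exact_mod_cast congrArg (Nat.cast : ℕ → ℝ) hmn
          congr 2
          rw [← hmn']
          ring
  calc (etaIntensity μν μc μη n) (Set.Ici t)
      = ∑ m ∈ Finset.range n, _ := by
        rw [etaIntensity]; simp [Measure.finset_sum_apply]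
    _ ≤ ∑ m ∈ Finset.range n, ENNReal.ofReal (Real.exp (-(θ * t) + γ + b * (n - 1 : ℕ))) :=
        Finset.sum_le_sum key
    _ = n * ENNReal.ofReal (Real.exp (-(θ * t) + γ + b * (n - 1 : ℕ))) := by
        simp [Finset.sum_const, nsmul_eq_mul]

lemma eta_limsup_bound (μν μη μc : Measure ℝ)
    [IsFiniteMeasure μν] [IsFiniteMeasure μη] [IsFiniteMeasure μc]
    (θ b γ a : ℝ) (hθ : 0 ≤ θ)
    (hν : Lt μν θ ≤ ENNReal.ofReal (Real.exp b))
    (hη : Lt μη θ ≤ ENNReal.ofReal (Real.exp b))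
    (hc : Lt μc θ ≤ ENNReal.ofReal (Real.exp γ)) :
    limsup (fun n : ℕ =>
        ((((n : ℝ)⁻¹ : ℝ) : EReal)) *
          ((etaIntensity μν μc μη n (Set.Ici ((n : ℝ) * a))).log))
      atTop ≤ ((-(θ * a) + b : ℝ) : EReal) := by
  set r : ℕ → ℝ := fun n =>
    (Real.log n + (-(θ * ((n : ℝ) * a)) + γ + b * ((n - 1 : ℕ) : ℝ))) / n with hr
  have step1 : ∀ n : ℕ, 1 ≤ n →
      ((((n : ℝ)⁻¹ : ℝ) : EReal)) *
        ((etaIntensity μν μc μη n (Set.Ici ((n : ℝ) * a))).log) ≤ ((r n : ℝ) : EReal) := by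
    intro n hn
    have hb := eta_bound μν μη μc θ b γ hθ hν hη hc n ((n : ℝ) * a)
    have hlog : ((etaIntensity μν μc μη n (Set.Ici ((n : ℝ) * a))).log) ≤
        ((Real.log n + (-(θ * ((n : ℝ) * a)) + γ + b * ((n - 1 : ℕ) : ℝ)) : ℝ) : EReal) := by
      refine le_trans (ENNReal.log_monotone hb) ?_
      rw [show ((n : ℕ) : ENNReal) = ENNReal.ofReal ((n : ℕ) : ℝ) by simp,
        ENNReal.log_mul_add, ENNReal.log_ofReal_of_pos (Real.exp_pos _), Real.log_exp,
        ENNReal.log_ofReal_of_pos (by exact_mod_cast Nat.lt_of_lt_of_le Nat.zero_lt_one hn)]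
      exact le_of_eq (by norm_cast)
    calc ((((n : ℝ)⁻¹ : ℝ) : EReal)) * _ ≤ ((((n : ℝ)⁻¹ : ℝ) : EReal)) *
          ((Real.log n + (-(θ * ((n : ℝ) * a)) + γ + b * ((n - 1 : ℕ) : ℝ)) : ℝ) : EReal) :=
        mul_le_mul_of_nonneg_left hlog (by exact_mod_cast inv_nonneg.2 (Nat.cast_nonneg n))
      _ = ((r n : ℝ) : EReal) := by
        rw [← EReal.coe_mul, hr]
        norm_num [div_eq_inv_mul]
  have step2 : Tendsto r atTop (𝓝 (-(θ * a) + b)) := by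
    have h1 : Tendsto (fun x : ℝ => Real.log x / x) atTop (𝓝 0) :=
      Real.isLittleO_log_id_atTop.tendsto_div_nhds_zero
    have h2 : Tendsto (fun x : ℝ => γ / x) atTop (𝓝 0) :=
      tendsto_const_nhds.div_atTop tendsto_id
    have h3 : Tendsto (fun x : ℝ => b * ((x - 1) / x)) atTop (𝓝 (b * 1)) := by
      refine Tendsto.const_mul b ?_
      have h0 : Tendsto (fun x : ℝ => 1 - 1/x) atTop (𝓝 1) := by
        simpa using (tendsto_const_nhds (x := (1:ℝ))).sub
          ((tendsto_const_nhds (x := (1:ℝ))).div_atTop (tendsto_id (α := ℝ)))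
      refine h0.congr' ?_
      filter_upwards [eventually_gt_atTop (0:ℝ)] with x hx
      field_simp
    have hg : Tendsto (fun x : ℝ => Real.log x / x + (-(θ * a) + γ / x + b * ((x - 1)/x)))
        atTop (𝓝 (0 + (-(θ * a) + 0 + b * 1))) := by
      exact h1.add ((tendsto_const_nhds.add h2).add h3)
    have hg' : Tendsto (fun n : ℕ => Real.log n / n + (-(θ * a) + γ / n + b * (((n:ℝ) - 1)/n)))
        atTop (𝓝 (-(θ * a) + b)) := by
      have := hg.comp tendsto_natCast_atTop_atTop (α := ℕ)
      simpa [Function.comp_def] using this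
    refine hg'.congr' ?_
    filter_upwards [eventually_ge_atTop 1] with n hn
    have hn0 : (n : ℝ) ≠ 0 := by
      exact_mod_cast (Nat.lt_of_lt_of_le Nat.zero_lt_one hn).ne'
    have : ((n - 1 : ℕ) : ℝ) = (n : ℝ) - 1 := by
      have : 1 ≤ n := hn
      push_cast [Nat.cast_sub this]
      ring
    rw [hr]
    simp only [this]
    field_simp
  have step3 : Tendsto (fun n : ℕ => ((r n : ℝ) : EReal)) atTop (𝓝 ((-(θ * a) + b : ℝ) : EReal)) :=
    (continuous_coe_real_ereal.tendsto _).comp step2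
  calc limsup _ atTop ≤ limsup (fun n : ℕ => ((r n : ℝ) : EReal)) atTop := by
        refine limsup_le_limsup ?_
        filter_upwards [eventually_ge_atTop 1] with n hn using step1 n hn
    _ = ((-(θ * a) + b : ℝ) : EReal) := step3.limsup_eq

lemma Lt_ne_zero (μ : Measure ℝ) (hμ : μ ≠ 0) (θ : ℝ) : Lt μ θ ≠ 0 := by
  unfold Lt
  rw [← pos_iff_ne_zero, lintegral_pos_iff_support (by fun_prop)]
  have : (Function.support fun z => ENNReal.ofReal (Real.exp (θ * z))) = Set.univ := by
    ext z
    simp [Function.support, (Real.exp_pos (θ * z))]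
  rw [this]
  exact Measure.measure_univ_pos.2 hμ

lemma exists_c (μ : Measure ℝ) (hμ : μ ≠ 0) : ∃ c : ℝ, μ (Set.Ici c) ≠ 0 := by
  by_contra h
  push_neg at h
  have : μ Set.univ = 0 := by
    have hsub : Set.univ ⊆ ⋃ n : ℕ, Set.Ici (-(n : ℝ)) := by
      intro x _
      obtain ⟨n, hn⟩ := exists_nat_ge (-x)
      exact Set.mem_iUnion.2 ⟨n, by simp [Set.mem_Ici]; linarith⟩
    refine le_antisymm (le_trans (measure_mono hsub) ?_) (zero_le)
    refine le_trans (measure_iUnion_le _) ?_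
    simp [h]
  exact hμ (by ext s hs; simpa using measure_mono_null (Set.subset_univ s) this)

lemma chernoff' (ρ : Measure ℝ) (θ t : ℝ) (hθ : 0 ≤ θ) :
    ENNReal.ofReal (Real.exp (θ * t)) * ρ (Set.Ici t) ≤ Lt ρ θ := by
  rw [← setLIntegral_const]
  refine le_trans (setLIntegral_mono (by fun_prop) ?_) (setLIntegral_le_lintegral _ _)
  intro z hz
  exact ENNReal.ofReal_le_ofReal (Real.exp_le_exp.2 (mul_le_mul_of_nonneg_left hz hθ))

lemma Lt_mono_finite (μ : Measure ℝ) [IsFiniteMeasure μ] (θ θ₁ : ℝ) (h0 : 0 ≤ θ) (h1 : θ ≤ θ₁)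
    (hfin : Lt μ θ₁ < ⊤) : Lt μ θ < ⊤ := by
  have hb : Lt μ θ ≤ ∫⁻ z, (1 + ENNReal.ofReal (Real.exp (θ₁ * z))) ∂μ := by
    refine lintegral_mono fun z => ?_
    rcases le_or_gt 0 z with hz | hz
    · refine le_trans ?_ le_add_self
      exact ENNReal.ofReal_le_ofReal (Real.exp_le_exp.2 (mul_le_mul_of_nonneg_right h1 hz))
    · refine le_trans ?_ le_self_add
      calc ENNReal.ofReal (Real.exp (θ * z)) ≤ ENNReal.ofReal 1 := by
            refine ENNReal.ofReal_le_ofReal ?_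
            rw [← Real.exp_zero]
            exact Real.exp_le_exp.2 (mul_nonpos_of_nonneg_of_nonpos h0 hz.le)
        _ ≤ 1 := by simp
  refine lt_of_le_of_lt hb ?_
  rw [lintegral_add_left (by fun_prop), lintegral_const, one_mul]
  exact ENNReal.add_lt_top.2 ⟨measure_lt_top μ _, hfin⟩

lemma log_lower (μ : Measure ℝ) [IsFiniteMeasure μ] (c : ℝ) (hc : μ (Set.Ici c) ≠ 0)
    (θ : ℝ) (hθ : 0 ≤ θ) (hfin : Lt μ θ ≠ ⊤) :
    θ * c + Real.log ((μ (Set.Ici c)).toReal) ≤ Real.log ((Lt μ θ).toReal) := by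
  have h1 := chernoff' μ θ c hθ
  have hm : 0 < (μ (Set.Ici c)).toReal :=
    ENNReal.toReal_pos hc (measure_ne_top μ _)
  have h2 : Real.exp (θ * c) * (μ (Set.Ici c)).toReal ≤ (Lt μ θ).toReal := by
    have := ENNReal.toReal_mono hfin h1
    rwa [ENNReal.toReal_mul, ENNReal.toReal_ofReal (Real.exp_nonneg _)] at this
  calc θ * c + Real.log ((μ (Set.Ici c)).toReal)
      = Real.log (Real.exp (θ * c) * (μ (Set.Ici c)).toReal) := by
        rw [Real.log_mul (Real.exp_ne_zero _) hm.ne', Real.log_exp]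
    _ ≤ _ := Real.log_le_log (by positivity) h2

lemma kappa_coe (μ : Measure ℝ) (hμ : μ ≠ 0) (θ : ℝ) (hθ : 0 ≤ θ) (hfin : Lt μ θ ≠ ⊤) :
    kappa μ θ = ((Real.log ((Lt μ θ).toReal) : ℝ) : EReal) := by
  rw [kappa, if_pos hθ]
  exact ENNReal.log_pos_real (Lt_ne_zero μ hμ θ) hfin

lemma extract (μ : Measure ℝ) (hμ : μ ≠ 0) (p q x ε : ℝ) (hε : 0 < ε)
    (h : ((p * x + q : ℝ) : EReal) ≤ kappaStar μ x) :
    ∃ θ : ℝ, 0 ≤ θ ∧ Lt μ θ ≠ ⊤ ∧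
      p * x + q - ε < θ * x - Real.log ((Lt μ θ).toReal) := by
  have h2 : ((p * x + q - ε : ℝ) : EReal) < kappaStar μ x :=
    lt_of_lt_of_le (by exact_mod_cast sub_lt_self _ hε) h
  rw [kappaStar, lt_iSup_iff] at h2
  obtain ⟨θ, hθ⟩ := h2
  have hθ0 : 0 ≤ θ := by
    by_contra hneg
    rw [kappa, if_neg hneg] at hθ
    simp only [EReal.sub_top] at hθ
    exact not_lt_bot hθ
  have hfin : Lt μ θ ≠ ⊤ := by
    intro htop
    rw [kappa, if_pos hθ0] at hθ
    rw [show (∫⁻ z, ENNReal.ofReal (Real.exp (θ * z)) ∂μ) = Lt μ θ from rfl, htop] at hθ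
    simp only [ENNReal.log_top, EReal.sub_top] at hθ
    exact not_lt_bot hθ
  refine ⟨θ, hθ0, hfin, ?_⟩
  rw [kappa_coe μ hμ θ hθ0 hfin, ← EReal.coe_sub] at hθ
  exact_mod_cast hθ

lemma fatou_bound (μ : Measure ℝ) (p B : ℝ)
    (hex : ∀ δ : ℝ, 0 < δ → ∃ θ : ℝ, 0 ≤ θ ∧ |θ - p| ≤ δ ∧
      Lt μ θ ≤ ENNReal.ofReal (Real.exp B)) :
    Lt μ p ≤ ENNReal.ofReal (Real.exp B) := by
  choose θk hθk0 hθkd hθkB using fun k : ℕ => hex (1 / (k + 1)) (by positivity)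
  have htend : Tendsto θk atTop (𝓝 p) := by
    have h0 : Tendsto (fun k : ℕ => θk k - p) atTop (𝓝 0) := by
      refine squeeze_zero_norm (fun k => hθkd k) ?_
      exact tendsto_one_div_add_atTop_nhds_zero_nat
    have := h0.add (tendsto_const_nhds (x := p))
    simpa using this
  have hpt : ∀ z : ℝ, Tendsto (fun k => ENNReal.ofReal (Real.exp (θk k * z))) atTop
      (𝓝 (ENNReal.ofReal (Real.exp (p * z)))) := by
    intro z
    exact (ENNReal.continuous_ofReal.tendsto _).comp
      ((Real.continuous_exp.tendsto _).comp ((htend.mul_const z)))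
  calc Lt μ p = ∫⁻ z, liminf (fun k => ENNReal.ofReal (Real.exp (θk k * z))) atTop ∂μ := by
        unfold Lt
        congr 1
        ext z
        exact ((hpt z).liminf_eq).symm
    _ ≤ liminf (fun k => Lt μ (θk k)) atTop := lintegral_liminf_le (fun k => by fun_prop)
    _ ≤ ENNReal.ofReal (Real.exp B) :=
        liminf_le_of_frequently_le (Frequently.of_forall fun k => hθkB k)

lemma minorant_nonneg (μ : Measure ℝ) [IsFiniteMeasure μ] (hμ : μ ≠ 0) (p q : ℝ)
    (hpq : ∀ x : ℝ, ((p * x + q : ℝ) : EReal) ≤ kappaStar μ x) : 0 ≤ p := by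
  by_contra hneg
  push_neg at hneg
  obtain ⟨c, hc⟩ := exists_c μ hμ
  set C := Real.log ((μ (Set.Ici c)).toReal) with hC
  -- kappaStar μ x ≤ -C for x ≤ c
  have hstar : ∀ x : ℝ, x ≤ c → kappaStar μ x ≤ ((-C : ℝ) : EReal) := by
    intro x hx
    rw [kappaStar]
    refine iSup_le fun θ => ?_
    rcases lt_or_ge θ 0 with hθ | hθ
    · rw [kappa, if_neg (not_le.2 hθ), EReal.sub_top]
      exact bot_le
    rcases eq_or_ne (Lt μ θ) ⊤ with htop | hfin
    · rw [kappa, if_pos hθ, show (∫⁻ z, ENNReal.ofReal (Real.exp (θ * z)) ∂μ) = Lt μ θ from rfl,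
        htop, ENNReal.log_top, EReal.sub_top]
      exact bot_le
    · rw [kappa_coe μ hμ θ hθ hfin, ← EReal.coe_sub]
      refine EReal.coe_le_coe_iff.2 ?_
      have h1 := log_lower μ c hc θ hθ hfin
      have h2 : θ * x ≤ θ * c := mul_le_mul_of_nonneg_left hx hθ
      linarith
  -- contradiction for very negative x
  set x := min c ((-C - q + 1) / p) with hx
  have hx1 : x ≤ c := min_le_left _ _
  have key := le_trans (hpq x) (hstar x hx1)
  rw [EReal.coe_le_coe_iff] at key
  have hx2 : p * x ≥ -C - q + 1 := by
    have : x ≤ (-C - q + 1) / p := min_le_right _ _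
    calc p * x ≥ p * ((-C - q + 1) / p) := mul_le_mul_of_nonpos_left this hneg.le
      _ = -C - q + 1 := by rw [mul_comm]; exact div_mul_cancel₀ _ hneg.ne
  linarith

lemma Lt_le_of_log_le (μ : Measure ℝ) (hμ : μ ≠ 0) (θ B : ℝ) (hfin : Lt μ θ ≠ ⊤)
    (h : Real.log ((Lt μ θ).toReal) ≤ B) : Lt μ θ ≤ ENNReal.ofReal (Real.exp B) := by
  rw [← ENNReal.ofReal_toReal hfin]
  refine ENNReal.ofReal_le_ofReal ?_
  have hpos : 0 < (Lt μ θ).toReal := ENNReal.toReal_pos (Lt_ne_zero μ hμ θ) hfin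
  calc (Lt μ θ).toReal = Real.exp (Real.log ((Lt μ θ).toReal)) := (Real.exp_log hpos).symm
    _ ≤ Real.exp B := Real.exp_le_exp.2 h

lemma minorant_bound_zero (μ : Measure ℝ) [IsFiniteMeasure μ] (hμ : μ ≠ 0) (q ε : ℝ)
    (hε : 0 < ε) (hpq : ∀ x : ℝ, ((0 * x + q : ℝ) : EReal) ≤ kappaStar μ x) :
    Lt μ 0 ≤ ENNReal.ofReal (Real.exp (-q + ε)) := by
  obtain ⟨c, hc⟩ := exists_c μ hμ
  set C := Real.log ((μ (Set.Ici c)).toReal) with hC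
  refine fatou_bound μ 0 (-q + ε) fun δ hδ => ?_
  set T := (1 + |ε - q - C|) / δ with hT
  have hT0 : 0 < T := by positivity
  set x := min c 0 - T with hx
  obtain ⟨θ, hθ0, hfin, hineq⟩ := extract μ hμ 0 q x ε hε (hpq x)
  have hxc : x ≤ c := by
    have := min_le_left c 0; simp only [hx]; linarith
  have hx0 : x ≤ 0 := by
    have := min_le_right c 0; simp only [hx]; linarith
  have hlog : Real.log ((Lt μ θ).toReal) < θ * x - q + ε := by nlinarith
  have hB : Real.log ((Lt μ θ).toReal) ≤ -q + ε := by nlinarith [mul_nonpos_of_nonneg_of_nonpos hθ0 hx0]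
  refine ⟨θ, hθ0, ?_, Lt_le_of_log_le μ hμ θ _ hfin hB⟩
  -- |θ - 0| ≤ δ
  have hlow := log_lower μ c hc θ hθ0 hfin
  have hcx : T ≤ c - x := by
    have := min_le_left c 0; simp only [hx]; linarith
  have hθT : θ * T ≤ θ * (c - x) := mul_le_mul_of_nonneg_left hcx hθ0
  have h1 : θ * (c - x) < ε - q - C := by nlinarith
  have h2 : θ * T < δ * T := by
    have : ε - q - C ≤ |ε - q - C| := le_abs_self _
    have hδT : δ * T = 1 + |ε - q - C| := by
      rw [hT]; field_simp
    nlinarith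
  have : θ < δ := lt_of_mul_lt_mul_right (by nlinarith) hT0.le
  rw [abs_of_nonneg (by simpa using hθ0)]
  simpa using this.le

lemma minorant_bound_sup (μ : Measure ℝ) [IsFiniteMeasure μ] (hμ : μ ≠ 0) (p q ε : ℝ)
    (hε : 0 < ε) (hp : 0 < p) (hall : ∀ θ : ℝ, p < θ → Lt μ θ = ⊤)
    (hpq : ∀ x : ℝ, ((p * x + q : ℝ) : EReal) ≤ kappaStar μ x) :
    Lt μ p ≤ ENNReal.ofReal (Real.exp (-q + ε)) := by
  obtain ⟨c, hc⟩ := exists_c μ hμ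
  set C := Real.log ((μ (Set.Ici c)).toReal) with hC
  refine fatou_bound μ p (-q + ε) fun δ hδ => ?_
  set R := ε - q - C + p * |c| with hR
  set x := max 1 ((1 + |R|) / δ) with hx
  have hx1 : 1 ≤ x := le_max_left _ _
  have hx0 : 0 < x := by linarith
  obtain ⟨θ, hθ0, hfin, hineq⟩ := extract μ hμ p q x ε hε (hpq x)
  have hθp : θ ≤ p := by
    by_contra hgt
    exact hfin (hall θ (not_le.1 hgt))
  have hB : Real.log ((Lt μ θ).toReal) ≤ -q + ε := by
    nlinarith [mul_nonneg (sub_nonneg.2 hθp) hx0.le]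
  refine ⟨θ, hθ0, ?_, Lt_le_of_log_le μ hμ θ _ hfin hB⟩
  have hlow := log_lower μ c hc θ hθ0 hfin
  have hcabs : θ * c ≥ -(p * |c|) := by
    have h1 : θ * c ≥ -(θ * |c|) := by
      have := neg_abs_le c
      nlinarith [abs_nonneg c]
    have h2 : θ * |c| ≤ p * |c| := mul_le_mul_of_nonneg_right hθp (abs_nonneg c)
    linarith
  have h1 : (p - θ) * x < R := by nlinarith
  have h2 : (1 + |R|) ≤ δ * x := by
    have hxge : (1 + |R|) / δ ≤ x := le_max_right _ _
    calc 1 + |R| = δ * ((1 + |R|) / δ) := by field_simp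
      _ ≤ δ * x := mul_le_mul_of_nonneg_left hxge hδ.le
  have h3 : (p - θ) * x < δ * x := by
    have : R ≤ |R| := le_abs_self _
    nlinarith
  have : p - θ < δ := lt_of_mul_lt_mul_right (by nlinarith) hx0.le
  rw [abs_of_nonpos (by linarith)]
  linarith

lemma integrable_exp_of_fin (μ : Measure ℝ) (θ : ℝ) (hfin : Lt μ θ ≠ ⊤) :
    Integrable (fun z => Real.exp (θ * z)) μ := by
  refine ⟨(by fun_prop : Measurable fun z => Real.exp (θ * z)).aestronglyMeasurable, ?_⟩
  rw [hasFiniteIntegral_iff_ofReal (ae_of_all _ fun z => (Real.exp_nonneg _))]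
  exact lt_top_iff_ne_top.2 hfin

lemma Lt_eq_ofReal_integral (μ : Measure ℝ) (θ : ℝ) (hfin : Lt μ θ ≠ ⊤) :
    Lt μ θ = ENNReal.ofReal (∫ z, Real.exp (θ * z) ∂μ) :=
  (ofReal_integral_eq_lintegral_ofReal (integrable_exp_of_fin μ θ hfin)
    (ae_of_all _ fun z => Real.exp_nonneg _)).symm

lemma minorant_bound_interior (μ : Measure ℝ) [IsFiniteMeasure μ] (hμ : μ ≠ 0) (p q ε : ℝ)
    (hε : 0 < ε) (hp : 0 < p) (θ₁ : ℝ) (hθ₁ : p < θ₁) (hfin₁ : Lt μ θ₁ ≠ ⊤)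
    (hpq : ∀ x : ℝ, ((p * x + q : ℝ) : EReal) ≤ kappaStar μ x) :
    Lt μ p ≤ ENNReal.ofReal (Real.exp (-q + ε)) := by
  have hfinp : Lt μ p ≠ ⊤ :=
    (Lt_mono_finite μ p θ₁ hp.le hθ₁.le (lt_top_iff_ne_top.2 hfin₁)).ne
  have hg_int : Integrable (fun z => Real.exp (p * z)) μ := integrable_exp_of_fin μ p hfinp
  have hθ₁_int : Integrable (fun z => Real.exp (θ₁ * z)) μ := integrable_exp_of_fin μ θ₁ hfin₁
  -- integrability of z * exp (p z)
  have hh_int : Integrable (fun z => z * Real.exp (p * z)) μ := by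
    refine Integrable.mono'
      ((hθ₁_int.const_mul (1 / (Real.exp 1 * (θ₁ - p)))).add
        (integrable_const (1 / (Real.exp 1 * p))))
      ((measurable_id.mul (by fun_prop : Measurable fun z : ℝ => Real.exp (p * z))).aestronglyMeasurable) ?_
    refine ae_of_all _ fun z => ?_
    rw [Real.norm_eq_abs, abs_mul, abs_of_pos (Real.exp_pos _)]
    rcases le_or_gt 0 z with hz | hz
    · rw [abs_of_nonneg hz]
      have key : (θ₁ - p) * z ≤ Real.exp ((θ₁ - p) * z - 1) := by
        nlinarith [Real.add_one_le_exp ((θ₁ - p) * z - 1)]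
      have hexp : Real.exp ((θ₁ - p) * z - 1) * Real.exp (p * z) =
          Real.exp (θ₁ * z) / Real.exp 1 := by
        rw [← Real.exp_add, ← Real.exp_sub]
        congr 1
        ring
      have h2 : (θ₁ - p) * z * Real.exp (p * z) ≤ Real.exp (θ₁ * z) / Real.exp 1 := by
        rw [← hexp]
        exact mul_le_mul_of_nonneg_right key (Real.exp_nonneg _)
      have h3 : z * Real.exp (p * z) ≤ Real.exp (θ₁ * z) / (Real.exp 1 * (θ₁ - p)) := by
        rw [div_mul_eq_div_div]
        rw [le_div_iff₀ (by linarith)]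
        calc z * Real.exp (p * z) * (θ₁ - p) = (θ₁ - p) * z * Real.exp (p * z) := by ring
          _ ≤ _ := h2
      calc z * Real.exp (p * z) ≤ Real.exp (θ₁ * z) / (Real.exp 1 * (θ₁ - p)) := h3
        _ = 1 / (Real.exp 1 * (θ₁ - p)) * Real.exp (θ₁ * z) := by ring
        _ ≤ 1 / (Real.exp 1 * (θ₁ - p)) * Real.exp (θ₁ * z) + 1 / (Real.exp 1 * p) := by
            have : 0 < 1 / (Real.exp 1 * p) := div_pos one_pos (mul_pos (Real.exp_pos 1) hp)
            linarith
    · rw [abs_of_neg hz]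
      have key : p * (-z) ≤ Real.exp (p * (-z) - 1) := by
        nlinarith [Real.add_one_le_exp (p * (-z) - 1)]
      have h2 : p * (-z) * Real.exp (p * z) ≤ 1 / Real.exp 1 := by
        have hexp : Real.exp (p * (-z) - 1) * Real.exp (p * z) = 1 / Real.exp 1 := by
          rw [← Real.exp_add]
          have : p * (-z) - 1 + p * z = -1 := by ring
          rw [this, Real.exp_neg]
          ring
        rw [← hexp]
        exact mul_le_mul_of_nonneg_right key (Real.exp_nonneg _)
      have h3 : (-z) * Real.exp (p * z) ≤ 1 / (Real.exp 1 * p) := by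
        rw [div_mul_eq_div_div, le_div_iff₀ hp]
        calc (-z) * Real.exp (p * z) * p = p * (-z) * Real.exp (p * z) := by ring
          _ ≤ _ := h2
      calc (-z) * Real.exp (p * z) ≤ 1 / (Real.exp 1 * p) := h3
        _ ≤ 1 / (Real.exp 1 * (θ₁ - p)) * Real.exp (θ₁ * z) + 1 / (Real.exp 1 * p) := by
            have : 0 ≤ 1 / (Real.exp 1 * (θ₁ - p)) * Real.exp (θ₁ * z) :=
              le_of_lt (mul_pos (div_pos one_pos (mul_pos (Real.exp_pos 1) (by linarith)))
                (Real.exp_pos _))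
            linarith
  set I := ∫ z, Real.exp (p * z) ∂μ with hI
  have hLtI : Lt μ p = ENNReal.ofReal I := Lt_eq_ofReal_integral μ p hfinp
  have hIpos : 0 < I := by
    by_contra hI0
    push_neg at hI0
    exact Lt_ne_zero μ hμ p (by rw [hLtI, ENNReal.ofReal_eq_zero.2 hI0])
  set D := ∫ z, z * Real.exp (p * z) ∂μ with hD
  set d := D / I with hd
  have key : ∀ θ : ℝ, ((θ * d : ℝ) : EReal) - kappa μ θ ≤ ((p * d - Real.log I : ℝ) : EReal) := by
    intro θ
    rcases lt_or_ge θ 0 with hθ | hθ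
    · rw [kappa, if_neg (not_le.2 hθ), EReal.sub_top]
      exact bot_le
    rcases eq_or_ne (Lt μ θ) ⊤ with htop | hfin
    · rw [kappa, if_pos hθ, show (∫⁻ z, ENNReal.ofReal (Real.exp (θ * z)) ∂μ) = Lt μ θ from rfl,
        htop, ENNReal.log_top, EReal.sub_top]
      exact bot_le
    · rw [kappa_coe μ hμ θ hθ hfin, ← EReal.coe_sub]
      refine EReal.coe_le_coe_iff.2 ?_
      set u := θ - p with hu
      set Iθ := ∫ z, Real.exp (θ * z) ∂μ with hIθ
      have hint : Integrable (fun z => Real.exp (u * d) *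
          (Real.exp (p * z) + u * (z * Real.exp (p * z)) - u * d * Real.exp (p * z))) μ := by
        exact (((hg_int.add (hh_int.const_mul u)).sub (hg_int.const_mul (u * d))).const_mul
          (Real.exp (u * d)))
      have hmono : Real.exp (u * d) * (I + u * D - u * d * I) ≤ Iθ := by
        have hptws : ∀ z : ℝ, Real.exp (u * d) *
            (Real.exp (p * z) + u * (z * Real.exp (p * z)) - u * d * Real.exp (p * z))
            ≤ Real.exp (θ * z) := by
          intro z
          have h1 : 1 + u * (z - d) ≤ Real.exp (u * (z - d)) := by
            nlinarith [Real.add_one_le_exp (u * (z - d))]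
          have h2 : Real.exp (u * d) * Real.exp (p * z) * (1 + u * (z - d)) ≤
              Real.exp (u * d) * Real.exp (p * z) * Real.exp (u * (z - d)) := by
            have : 0 ≤ Real.exp (u * d) * Real.exp (p * z) := by positivity
            nlinarith
          calc Real.exp (u * d) *
              (Real.exp (p * z) + u * (z * Real.exp (p * z)) - u * d * Real.exp (p * z))
              = Real.exp (u * d) * Real.exp (p * z) * (1 + u * (z - d)) := by ring
            _ ≤ Real.exp (u * d) * Real.exp (p * z) * Real.exp (u * (z - d)) := h2
            _ = Real.exp (θ * z) := by
                rw [← Real.exp_add, ← Real.exp_add]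
                congr 1
                rw [hu]
                ring
        have := integral_mono hint (integrable_exp_of_fin μ θ hfin) (fun z => hptws z)
        calc Real.exp (u * d) * (I + u * D - u * d * I)
            = ∫ z, Real.exp (u * d) *
              (Real.exp (p * z) + u * (z * Real.exp (p * z)) - u * d * Real.exp (p * z)) ∂μ := by
              rw [integral_const_mul]
              congr 1
              rw [integral_sub
                  (by exact hg_int.add (hh_int.const_mul u) :
                    Integrable (fun z => Real.exp (p * z) + u * (z * Real.exp (p * z))) μ)
                  (by exact hg_int.const_mul (u * d) :
                    Integrable (fun z => u * d * Real.exp (p * z)) μ),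
                integral_add hg_int
                  (by exact hh_int.const_mul u :
                    Integrable (fun z => u * (z * Real.exp (p * z))) μ),
                integral_const_mul, integral_const_mul]
          _ ≤ Iθ := this
      have hudI : u * D - u * d * I = 0 := by
        rw [hd]
        field_simp
        ring
      have hmono' : Real.exp (u * d) * I ≤ Iθ := by
        calc Real.exp (u * d) * I = Real.exp (u * d) * (I + (u * D - u * d * I)) := by
              rw [hudI]; ring
          _ = Real.exp (u * d) * (I + u * D - u * d * I) := by ring
          _ ≤ Iθ := hmono
      have hIθtoReal : (Lt μ θ).toReal = Iθ := by
        rw [Lt_eq_ofReal_integral μ θ hfin, ENNReal.toReal_ofReal]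
        exact le_trans (by positivity) hmono'
      rw [hIθtoReal]
      have hIθpos : 0 < Iθ := lt_of_lt_of_le (by positivity) hmono'
      have hlog : Real.log I + u * d ≤ Real.log Iθ := by
        calc Real.log I + u * d = Real.log (Real.exp (u * d) * I) := by
              rw [Real.log_mul (Real.exp_ne_zero _) hIpos.ne', Real.log_exp]
              ring
          _ ≤ Real.log Iθ := Real.log_le_log (by positivity) hmono'
      rw [hu] at hlog
      nlinarith
  have hsup : kappaStar μ d ≤ ((p * d - Real.log I : ℝ) : EReal) := by
    rw [kappaStar]
    exact iSup_le key
  have := le_trans (hpq d) hsup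
  rw [EReal.coe_le_coe_iff] at this
  have hlogI : Real.log I ≤ -q := by linarith
  rw [hLtI]
  refine ENNReal.ofReal_le_ofReal ?_
  calc I = Real.exp (Real.log I) := (Real.exp_log hIpos).symm
    _ ≤ Real.exp (-q + ε) := Real.exp_le_exp.2 (by linarith)

lemma minorant_master (μ : Measure ℝ) [IsFiniteMeasure μ] (hμ : μ ≠ 0) (p q ε : ℝ)
    (hε : 0 < ε) (hp : 0 ≤ p)
    (hpq : ∀ x : ℝ, ((p * x + q : ℝ) : EReal) ≤ kappaStar μ x) :
    Lt μ p ≤ ENNReal.ofReal (Real.exp (-q + ε)) := by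
  rcases eq_or_lt_of_le hp with hp0 | hppos
  · exact hp0 ▸ minorant_bound_zero μ hμ q ε hε (hp0 ▸ hpq)
  by_cases hex : ∃ θ₁ : ℝ, p < θ₁ ∧ Lt μ θ₁ ≠ ⊤
  · obtain ⟨θ₁, hθ₁, hfin₁⟩ := hex
    exact minorant_bound_interior μ hμ p q ε hε hppos θ₁ hθ₁ hfin₁ hpq
  · push_neg at hex
    exact minorant_bound_sup μ hμ p q ε hε hppos (fun θ hθ => hex θ hθ) hpq


/-- Expected numbers of the second type grow at rate governed by the convex
minorant of the two duals:
`limsup_n (1/n) log ν_n([n a, ∞)) ≤ −cv(κ*_ν, κ*_η)(a)`. -/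
theorem eta_expected_numbers_upper_bound (μν μη μc : Measure ℝ)
    [IsFiniteMeasure μν] [IsFiniteMeasure μη] [IsFiniteMeasure μc]
    (hν : 1 < μν Set.univ) (hη : 0 < μη Set.univ) (hc : μc ≠ 0)
    (hcexp : ∀ θ : ℝ, 0 ≤ θ → ∫⁻ z, ENNReal.ofReal (Real.exp (θ * z)) ∂μc < ⊤)
    (hφ : ∃ φν φη : ℝ, 0 < φν ∧ φν ≤ φη ∧ kappa μν φν < ⊤ ∧ kappa μη φη < ⊤) :
    ∀ a : ℝ,
      limsup (fun n : ℕ =>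
          ((((n : ℝ)⁻¹ : ℝ) : EReal)) *
            ((etaIntensity μν μc μη n (Set.Ici ((n : ℝ) * a))).log))
        atTop ≤ -(cvMinorant (kappaStar μν) (kappaStar μη) a) := by
  intro a
  have hμν : μν ≠ 0 := by
    intro h
    rw [h] at hν
    simp at hν
  have hμη : μη ≠ 0 := by
    intro h
    rw [h] at hη
    simp at hη
  set LS := limsup (fun n : ℕ =>
      ((((n : ℝ)⁻¹ : ℝ) : EReal)) *
        ((etaIntensity μν μc μη n (Set.Ici ((n : ℝ) * a))).log)) atTop with hLS
  -- main step : for every affine minorant, LS ≤ -(p a + q)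
  have main : ∀ p q : ℝ,
      (∀ x : ℝ, ((p * x + q : ℝ) : EReal) ≤ min (kappaStar μν x) (kappaStar μη x)) →
      LS ≤ ((-(p * a + q) : ℝ) : EReal) := by
    intro p q H
    have hpqν : ∀ x : ℝ, ((p * x + q : ℝ) : EReal) ≤ kappaStar μν x :=
      fun x => le_trans (H x) (min_le_left _ _)
    have hpqη : ∀ x : ℝ, ((p * x + q : ℝ) : EReal) ≤ kappaStar μη x :=
      fun x => le_trans (H x) (min_le_right _ _)
    have hp : 0 ≤ p := minorant_nonneg μν hμν p q hpqν
    -- the c-measure bound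
    have hcfin : Lt μc p ≠ ⊤ := (hcexp p hp).ne
    set γ := Real.log ((Lt μc p).toReal) with hγ
    have hcbound : Lt μc p ≤ ENNReal.ofReal (Real.exp γ) :=
      Lt_le_of_log_le μc hc p γ hcfin le_rfl
    -- bound for every ε > 0
    have step : ∀ ε : ℝ, 0 < ε → LS ≤ ((-(p * a + q) + ε : ℝ) : EReal) := by
      intro ε hε
      have hbν := minorant_master μν hμν p q ε hε hp hpqν
      have hbη := minorant_master μη hμη p q ε hε hp hpqη
      have := eta_limsup_bound μν μη μc p (-q + ε) γ a hp hbν hbη hcbound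
      rw [hLS]
      exact le_trans this (EReal.coe_le_coe_iff.2 (le_of_eq (by ring)))
    -- pass to the limit ε → 0
    have htend : Tendsto (fun n : ℕ => ((-(p * a + q) + 1 / (n + 1) : ℝ) : EReal)) atTop
        (𝓝 ((-(p * a + q) : ℝ) : EReal)) := by
      refine (continuous_coe_real_ereal.tendsto _).comp ?_
      have : Tendsto (fun n : ℕ => 1 / ((n : ℝ) + 1)) atTop (𝓝 0) :=
        tendsto_one_div_add_atTop_nhds_zero_nat
      have h2 := (tendsto_const_nhds (x := -(p * a + q)) (f := atTop (α := ℕ))).add this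
      simpa using h2
    exact ge_of_tendsto' htend fun n => step (1 / (n + 1)) (by positivity)
  -- conclude
  rw [cvMinorant]
  refine EReal.le_neg_of_le_neg ?_
  refine iSup_le fun p => iSup_le fun q => iSup_le fun H => ?_
  refine EReal.le_neg_of_le_neg ?_
  refine le_trans (main p q H) ?_
  rw [← EReal.coe_neg]
end
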